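/- arXiv:1812.08065 — 2 statements merged into one kernel-verified Lean document; each statement's English description precedes it below -/
import Mathlib

section
/- Let N be a cherry-picking network, let S be a minimal CPS reducing N with S_i = (x,y) reducing a cherry at step i, and let z, w be distinct leaves sharing the same parent as x and y at that step. If S' is the sequence S_{[i+1:]} with every occurrence of z replaced by x, then S_{[:i-1]}(z,w)S' is also a minimal CPS for N. -/
open scoped Classical

/-- A (representation of a) rooted phylogenetic network: vertices are natural
numbers, `E` is the edge set, `root` the root, `taxa` the set of taxa labelling
the leaves via `label`. -/
structure Network (X : Type) where
  V : Finset ℕ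
  E : Finset (ℕ × ℕ)
  root : ℕ
  taxa : Finset X
  label : X → ℕ

namespace Network

variable {X : Type}

noncomputable def indeg (N : Network X) (v : ℕ) : ℕ :=
  (N.E.filter (fun e => e.2 = v)).card

noncomputable def outdeg (N : Network X) (v : ℕ) : ℕ :=
  (N.E.filter (fun e => e.1 = v)).card

noncomputable def parents (N : Network X) (v : ℕ) : Finset ℕ :=
  (N.E.filter (fun e => e.2 = v)).image Prod.fst

noncomputable def children (N : Network X) (v : ℕ) : Finset ℕ :=
  (N.E.filter (fun e => e.1 = v)).image Prod.snd

/-- The parent of a vertex (meaningful when the vertex has a unique parent,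
e.g. for leaves). -/
noncomputable def theParent (N : Network X) (v : ℕ) : ℕ :=
  WithTop.untopD 0 (N.parents v).min

def IsLeafNode (N : Network X) (v : ℕ) : Prop := N.indeg v = 1 ∧ N.outdeg v = 0

def IsTreeNode (N : Network X) (v : ℕ) : Prop := N.indeg v = 1 ∧ 2 ≤ N.outdeg v

def IsRetic (N : Network X) (v : ℕ) : Prop := 2 ≤ N.indeg v ∧ N.outdeg v = 1

/-- Well-formedness: a phylogenetic network has a single outdegree-1, indegree-0
root, leaves bijectively labelled by the taxa, all other nodes tree nodes or
reticulations, and it is acyclic. -/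
def IsPhylo (N : Network X) : Prop :=
  N.root ∈ N.V ∧ N.indeg N.root = 0 ∧ N.outdeg N.root = 1 ∧
  (∀ e ∈ N.E, e.1 ∈ N.V ∧ e.2 ∈ N.V) ∧
  Set.InjOn N.label ↑N.taxa ∧
  (∀ x ∈ N.taxa, N.label x ∈ N.V ∧ N.IsLeafNode (N.label x)) ∧
  (∀ v ∈ N.V, N.IsLeafNode v → ∃ x ∈ N.taxa, N.label x = v) ∧
  (∀ v ∈ N.V, v = N.root ∨ N.IsLeafNode v ∨ N.IsTreeNode v ∨ N.IsRetic v) ∧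
  (∀ v : ℕ, ¬ Relation.TransGen (fun a b => (a, b) ∈ N.E) v v)

def SemiBinary (N : Network X) : Prop := ∀ v ∈ N.V, N.IsTreeNode v → N.outdeg v = 2

def IsBinary (N : Network X) : Prop :=
  N.SemiBinary ∧ ∀ v ∈ N.V, N.IsRetic v → N.indeg v = 2

def StackFree (N : Network X) : Prop :=
  ∀ e ∈ N.E, ¬ (N.IsRetic e.1 ∧ N.IsRetic e.2)

def IsTreeChild (N : Network X) : Prop :=
  N.StackFree ∧
  ∀ v ∈ N.V, N.IsTreeNode v → ∃ c ∈ N.children v, N.IsTreeNode c ∨ N.IsLeafNode c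

def IsTree (N : Network X) : Prop := ∀ v ∈ N.V, ¬ N.IsRetic v

/-- Number of reticulation edges minus number of reticulations. -/
noncomputable def reticulationNumber (N : Network X) : ℕ :=
  (N.E.filter (fun e => N.IsRetic e.2)).card - (N.V.filter (fun v => N.IsRetic v)).card

/-- `(x, y)` is a cherry: two distinct leaves sharing a parent. -/
def IsCherry (N : Network X) (x y : X) : Prop :=
  x ∈ N.taxa ∧ y ∈ N.taxa ∧ x ≠ y ∧
  ∃ p : ℕ, (p, N.label x) ∈ N.E ∧ (p, N.label y) ∈ N.E

/-- `(x, y)` is a reticulated cherry: the parent of `x` is a reticulation, the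
parent of `y` a tree node which is also a parent of the parent of `x`. -/
def IsRetCherry (N : Network X) (x y : X) : Prop :=
  x ∈ N.taxa ∧ y ∈ N.taxa ∧ x ≠ y ∧
  ∃ px py : ℕ, (px, N.label x) ∈ N.E ∧ (py, N.label y) ∈ N.E ∧
    N.IsRetic px ∧ N.IsTreeNode py ∧ (py, px) ∈ N.E

def ReduciblePair (N : Network X) (x y : X) : Prop :=
  N.IsCherry x y ∨ N.IsRetCherry x y

noncomputable def delVert (N : Network X) (v : ℕ) : Network X :=
  { V := N.V.erase v,
    E := N.E.filter (fun e => e.1 ≠ v ∧ e.2 ≠ v),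
    root := N.root, taxa := N.taxa, label := N.label }

noncomputable def delEdge (N : Network X) (e : ℕ × ℕ) : Network X :=
  { N with E := N.E.erase e }

/-- Suppress a degree-2 (indegree-1, outdegree-1) vertex. -/
noncomputable def suppress (N : Network X) (v : ℕ) : Network X :=
  if N.indeg v = 1 ∧ N.outdeg v = 1 then
    { V := N.V.erase v,
      E := (N.E.filter (fun e => e.1 ≠ v ∧ e.2 ≠ v)) ∪ (N.parents v ×ˢ N.children v),
      root := N.root, taxa := N.taxa, label := N.label }
  else N

/-- Reduce an ordered pair `(x, y)`: in the cherry case delete the leaf `x` and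
suppress its parent; in the reticulated-cherry case delete the reticulation edge
between the two parents and suppress the resulting degree-2 vertices; otherwise
do nothing. -/
noncomputable def reducePair (N : Network X) (c : X × X) : Network X :=
  if N.IsCherry c.1 c.2 then
    suppress
      { V := N.V.erase (N.label c.1),
        E := N.E.filter (fun e => e.1 ≠ N.label c.1 ∧ e.2 ≠ N.label c.1),
        root := N.root, taxa := N.taxa.erase c.1, label := N.label }
      (N.theParent (N.label c.1))
  else if N.IsRetCherry c.1 c.2 then
    (((N.delEdge (N.theParent (N.label c.2), N.theParent (N.label c.1))).suppress
        (N.theParent (N.label c.2))).suppress (N.theParent (N.label c.1)))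
  else N

/-- Successive reduction of a network by a sequence of ordered pairs. -/
noncomputable def reduceSeq (N : Network X) (S : List (X × X)) : Network X :=
  S.foldl (fun M c => M.reducePair c) N

/-- A network consisting of a single leaf, its root, and the edge between them. -/
def IsSingleLeaf (N : Network X) : Prop :=
  ∃ x ∈ N.taxa, N.V = {N.root, N.label x} ∧ N.E = {(N.root, N.label x)} ∧
    N.root ≠ N.label x

/-- `S` reduces `N` to a single-leaf network. -/
def Reduces (S : List (X × X)) (N : Network X) : Prop :=
  (N.reduceSeq S).IsSingleLeaf

/-- A cherry-picking sequence: ordered pairs of distinct taxa such that each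
second coordinate reappears later as a first coordinate, or is the second
coordinate of the last pair. -/
def IsCPS (S : List (X × X)) : Prop :=
  (∀ p ∈ S, p.1 ≠ p.2) ∧
  ∀ (i : ℕ) (hi : i < S.length),
    ((S.get ⟨i, hi⟩).2 ∈ (S.drop (i + 1)).map Prod.fst) ∨
    (∃ q, S.getLast? = some q ∧ (S.get ⟨i, hi⟩).2 = q.2)

/-- A tree-child sequence: a CPS in which a leaf appearing as a first coordinate
never appears later as a second coordinate. -/
def IsTCS (S : List (X × X)) : Prop :=
  IsCPS S ∧
  ∀ (i j : ℕ) (hi : i < S.length) (hj : j < S.length),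
    i < j → (S.get ⟨i, hi⟩).1 ≠ (S.get ⟨j, hj⟩).2

def IsPartialCPS (S : List (X × X)) : Prop := ∃ T, IsCPS (S ++ T)

def IsPartialTCS (S : List (X × X)) : Prop := ∃ T, IsTCS (S ++ T)

/-- A minimal CPS for `N`: a CPS reducing `N` in which every pair changes the
network. -/
def IsMinimalCPS (S : List (X × X)) (N : Network X) : Prop :=
  IsCPS S ∧ Reduces S N ∧
  ∀ i < S.length, N.reduceSeq (S.take (i + 1)) ≠ N.reduceSeq (S.take i)

def IsMinimalTCS (S : List (X × X)) (N : Network X) : Prop :=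
  IsTCS S ∧ Reduces S N ∧
  ∀ i < S.length, N.reduceSeq (S.take (i + 1)) ≠ N.reduceSeq (S.take i)

/-- A cherry-picking network: a phylogenetic network reducible by some CPS. -/
def IsCPN (N : Network X) : Prop :=
  N.IsPhylo ∧ ∃ S, IsCPS S ∧ Reduces S N

/-- A directed path in `N`, given as its list of vertices. -/
def IsDipath (N : Network X) (l : List ℕ) : Prop :=
  l.Chain' (fun a b => (a, b) ∈ N.E)

def pathEdges (l : List ℕ) : List (ℕ × ℕ) := l.zip l.tail

/-- An embedding of `N'` into `N`: an injective node map and a map of edges to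
edge-disjoint directed paths, respecting the node map and the leaf labels. -/
def IsEmbedding (N' N : Network X) (f : ℕ → ℕ) (g : ℕ × ℕ → List ℕ) : Prop :=
  (∀ v ∈ N'.V, f v ∈ N.V) ∧
  Set.InjOn f ↑N'.V ∧
  (∀ x ∈ N'.taxa, f (N'.label x) = N.label x) ∧
  (∀ e ∈ N'.E, N.IsDipath (g e) ∧ (g e).head? = some (f e.1) ∧
    (g e).getLast? = some (f e.2)) ∧
  (∀ e ∈ N'.E, ∀ e' ∈ N'.E, e ≠ e' →
    ∀ p ∈ pathEdges (g e), p ∉ pathEdges (g e'))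

/-- `N'` is a subnetwork of `N` if `N'` embeds into `N`. -/
def IsSubnetwork (N' N : Network X) : Prop :=
  ∃ f g, IsEmbedding N' N f g

/-- Contract the edge `(u, v)`, identifying `v` with `u`. -/
noncomputable def contractEdge (N : Network X) (u v : ℕ) : Network X :=
  { V := N.V.erase v,
    E := (N.E.erase (u, v)).image
      (fun e => ((if e.1 = v then u else e.1), (if e.2 = v then u else e.2))),
    root := if N.root = v then u else N.root,
    taxa := N.taxa,
    label := fun x => if N.label x = v then u else N.label x }

def ContractStep (N M : Network X) : Prop :=
  ∃ u v : ℕ, (u, v) ∈ N.E ∧ M = N.contractEdge u v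

/-- `N` is a refinement of `M` if `M` can be obtained from `N` by contracting
some edges. -/
def IsRefinement (N M : Network X) : Prop :=
  Relation.ReflTransGen ContractStep N M

/-- `N` contains `M` if some refinement of `M` is a subnetwork of `N`. -/
def Contains (N M : Network X) : Prop :=
  ∃ M' : Network X, IsRefinement M' M ∧ IsSubnetwork M' N

/-- Isomorphism of labelled networks. -/
def Isomorphic (N N' : Network X) : Prop :=
  N.taxa = N'.taxa ∧
  ∃ f : ℕ → ℕ, Set.BijOn f ↑N.V ↑N'.V ∧
    (∀ u ∈ N.V, ∀ v ∈ N.V, ((u, v) ∈ N.E ↔ (f u, f v) ∈ N'.E)) ∧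
    f N.root = N'.root ∧
    (∀ x ∈ N.taxa, f (N.label x) = N'.label x)

end Network

open Network

namespace Network

variable {X : Type}

/-! ### Basic lemmas about reduction -/

lemma reduceSeq_nil (N : Network X) : N.reduceSeq ([] : List (X × X)) = N := rfl

lemma reduceSeq_cons (N : Network X) (c : X × X) (T : List (X × X)) :
    N.reduceSeq (c :: T) = (N.reducePair c).reduceSeq T := rfl

lemma reduceSeq_append (N : Network X) (T₁ T₂ : List (X × X)) :
    N.reduceSeq (T₁ ++ T₂) = (N.reduceSeq T₁).reduceSeq T₂ :=
  List.foldl_append ..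

lemma suppress_taxa (N : Network X) (v : ℕ) : (N.suppress v).taxa = N.taxa := by
  unfold suppress; split <;> rfl

lemma suppress_label (N : Network X) (v : ℕ) : (N.suppress v).label = N.label := by
  unfold suppress; split <;> rfl

lemma suppress_root (N : Network X) (v : ℕ) : (N.suppress v).root = N.root := by
  unfold suppress; split <;> rfl

lemma delEdge_taxa (N : Network X) (e : ℕ × ℕ) : (N.delEdge e).taxa = N.taxa := rfl

lemma reducePair_of_not (N : Network X) (c : X × X) (h1 : ¬ N.IsCherry c.1 c.2)
    (h2 : ¬ N.IsRetCherry c.1 c.2) : N.reducePair c = N := by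
  unfold reducePair; rw [if_neg h1, if_neg h2]

lemma reducePair_taxa_cherry (N : Network X) (c : X × X) (h : N.IsCherry c.1 c.2) :
    (N.reducePair c).taxa = N.taxa.erase c.1 := by
  unfold reducePair; rw [if_pos h, suppress_taxa]

lemma reducePair_taxa_ret (N : Network X) (c : X × X) (h1 : ¬ N.IsCherry c.1 c.2)
    (h2 : N.IsRetCherry c.1 c.2) : (N.reducePair c).taxa = N.taxa := by
  unfold reducePair; rw [if_neg h1, if_pos h2, suppress_taxa, suppress_taxa, delEdge_taxa]

lemma reducePair_taxa_subset (N : Network X) (c : X × X) :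
    (N.reducePair c).taxa ⊆ N.taxa := by
  by_cases h1 : N.IsCherry c.1 c.2
  · rw [reducePair_taxa_cherry N c h1]; exact Finset.erase_subset _ _
  · by_cases h2 : N.IsRetCherry c.1 c.2
    · rw [reducePair_taxa_ret N c h1 h2]
    · rw [reducePair_of_not N c h1 h2]

lemma mem_taxa_reducePair (N : Network X) (c : X × X) {t : X} (ht : t ∈ N.taxa)
    (hne : t ≠ c.1) : t ∈ (N.reducePair c).taxa := by
  by_cases h1 : N.IsCherry c.1 c.2
  · rw [reducePair_taxa_cherry N c h1]; exact Finset.mem_erase.mpr ⟨hne, ht⟩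
  · by_cases h2 : N.IsRetCherry c.1 c.2
    · rw [reducePair_taxa_ret N c h1 h2]; exact ht
    · rw [reducePair_of_not N c h1 h2]; exact ht

lemma reducePair_noop_fst (N : Network X) (c : X × X) (h : c.1 ∉ N.taxa) :
    N.reducePair c = N :=
  reducePair_of_not N c (fun hc => h hc.1) (fun hc => h hc.1)

lemma reducePair_noop_snd (N : Network X) (c : X × X) (h : c.2 ∉ N.taxa) :
    N.reducePair c = N :=
  reducePair_of_not N c (fun hc => h hc.2.1) (fun hc => h hc.2.1)

lemma reduciblePair_of_change (N : Network X) (c : X × X) (h : N.reducePair c ≠ N) :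
    N.IsCherry c.1 c.2 ∨ N.IsRetCherry c.1 c.2 := by
  by_contra hc
  push_neg at hc
  exact h (reducePair_of_not N c hc.1 hc.2)

lemma snd_mem_taxa_of_change (N : Network X) (c : X × X) (h : N.reducePair c ≠ N) :
    c.2 ∈ (N.reducePair c).taxa := by
  rcases reduciblePair_of_change N c h with hc | hc
  · rw [reducePair_taxa_cherry N c hc]
    exact Finset.mem_erase.mpr ⟨(hc.2.2.1 ∘ Eq.symm), hc.2.1⟩
  · by_cases h1 : N.IsCherry c.1 c.2
    · rw [reducePair_taxa_cherry N c h1]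
      exact Finset.mem_erase.mpr ⟨(h1.2.2.1 ∘ Eq.symm), h1.2.1⟩
    · rw [reducePair_taxa_ret N c h1 hc]; exact hc.2.1

lemma taxa_reduceSeq_subset (N : Network X) (T : List (X × X)) :
    (N.reduceSeq T).taxa ⊆ N.taxa := by
  induction T generalizing N with
  | nil => exact fun _ h => h
  | cons c T ih =>
      rw [reduceSeq_cons]
      exact (ih (N.reducePair c)).trans (reducePair_taxa_subset N c)

lemma mem_taxa_reduceSeq (N : Network X) (T : List (X × X)) {t : X} (ht : t ∈ N.taxa)
    (h : t ∉ T.map Prod.fst) : t ∈ (N.reduceSeq T).taxa := by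
  induction T generalizing N with
  | nil => exact ht
  | cons c T ih =>
      rw [List.map_cons, List.mem_cons] at h
      push_neg at h
      rw [reduceSeq_cons]
      exact ih (N.reducePair c) (mem_taxa_reducePair N c ht (fun he => h.1 he)) h.2

end Network
namespace Network

variable {X : Type}

/-! ### Unique incoming edges, `theParent` -/

lemma edge_unique (N : Network X) {v q : ℕ} (hdeg : N.indeg v ≤ 1) (he : (q, v) ∈ N.E) :
    ∀ e ∈ N.E, e.2 = v → e = (q, v) := by
  intro e heE hev
  have h1 : e ∈ N.E.filter (fun e => e.2 = v) := Finset.mem_filter.mpr ⟨heE, hev⟩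
  have h2 : (q, v) ∈ N.E.filter (fun e => e.2 = v) := Finset.mem_filter.mpr ⟨he, rfl⟩
  exact Finset.card_le_one.mp hdeg _ h1 _ h2

lemma no_out (N : Network X) {v : ℕ} (hdeg : N.outdeg v = 0) :
    ∀ e ∈ N.E, e.1 ≠ v := by
  intro e heE hev
  have h1 : e ∈ N.E.filter (fun e => e.1 = v) := Finset.mem_filter.mpr ⟨heE, hev⟩
  rw [Finset.card_eq_zero.mp hdeg] at h1
  exact absurd h1 (Finset.notMem_empty e)

lemma parents_eq_singleton (N : Network X) {v q : ℕ} (hdeg : N.indeg v ≤ 1)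
    (he : (q, v) ∈ N.E) : N.parents v = {q} := by
  have : N.E.filter (fun e => e.2 = v) = {(q, v)} := by
    apply Finset.eq_singleton_iff_unique_mem.mpr
    exact ⟨Finset.mem_filter.mpr ⟨he, rfl⟩,
      fun e hef => edge_unique N hdeg he e (Finset.mem_filter.mp hef).1
        (Finset.mem_filter.mp hef).2⟩
  rw [parents, this, Finset.image_singleton]

lemma theParent_eq (N : Network X) {v q : ℕ} (hdeg : N.indeg v ≤ 1)
    (he : (q, v) ∈ N.E) : N.theParent v = q := by
  rw [theParent, parents_eq_singleton N hdeg he, Finset.min_singleton]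
  rfl

/-! ### The invariant preserved along reductions -/

structure Inv (N A : Network X) : Prop where
  labN : A.label = N.label
  rootN : A.root = N.root
  taxaN : A.taxa ⊆ N.taxa
  memV : ∀ t ∈ A.taxa, A.label t ∈ A.V
  indeg1 : ∀ t ∈ A.taxa, A.indeg (A.label t) ≤ 1
  outdeg0 : ∀ t ∈ A.taxa, A.outdeg (A.label t) = 0
  neRoot : ∀ t ∈ A.taxa, A.label t ≠ A.root

lemma inv_self (N : Network X) (h : N.IsPhylo) : Inv N N := by
  obtain ⟨_, hroot0, _, _, _, hleaf, _⟩ := h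
  refine ⟨rfl, rfl, fun _ h => h, fun t ht => (hleaf t ht).1,
    fun t ht => le_of_eq (hleaf t ht).2.1, fun t ht => (hleaf t ht).2.2, ?_⟩
  intro t ht heq
  have h1 : N.indeg (N.label t) = 1 := (hleaf t ht).2.1
  rw [heq, hroot0] at h1
  exact absurd h1 one_ne_zero.symm

lemma indeg_le_of_subset {N A : Network X} {v : ℕ} (h : A.E ⊆ N.E)
    (hA : N.indeg v ≤ 1) : A.indeg v ≤ 1 :=
  le_trans (Finset.card_le_card (Finset.filter_subset_filter _ h)) hA

lemma outdeg_eq_zero_of_subset {N A : Network X} {v : ℕ} (h : A.E ⊆ N.E)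
    (hA : N.outdeg v = 0) : A.outdeg v = 0 :=
  Nat.le_zero.mp (hA ▸ Finset.card_le_card (Finset.filter_subset_filter _ h))

lemma inv_suppress {N A : Network X} (h : Inv N A) (v : ℕ) : Inv N (A.suppress v) := by
  unfold suppress
  split
  case isFalse => exact h
  case isTrue hc =>
    obtain ⟨hin, hout⟩ := hc
    -- the unique in-edge and out-edge of v
    obtain ⟨e₀, he₀⟩ := Finset.card_eq_one.mp hin
    obtain ⟨f₀, hf₀⟩ := Finset.card_eq_one.mp hout
    have he₀E : e₀ ∈ A.E ∧ e₀.2 = v := by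
      have : e₀ ∈ A.E.filter (fun e => e.2 = v) := he₀ ▸ Finset.mem_singleton_self e₀
      exact ⟨(Finset.mem_filter.mp this).1, (Finset.mem_filter.mp this).2⟩
    have hf₀E : f₀ ∈ A.E ∧ f₀.1 = v := by
      have : f₀ ∈ A.E.filter (fun e => e.1 = v) := hf₀ ▸ Finset.mem_singleton_self f₀
      exact ⟨(Finset.mem_filter.mp this).1, (Finset.mem_filter.mp this).2⟩
    have hpar : A.parents v = {e₀.1} := by rw [parents, he₀, Finset.image_singleton]
    have hchi : A.children v = {f₀.2} := by rw [children, hf₀, Finset.image_singleton]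
    have hprod : A.parents v ×ˢ A.children v = {(e₀.1, f₀.2)} := by
      rw [hpar, hchi, Finset.singleton_product_singleton]
    refine ⟨h.labN, h.rootN, h.taxaN, ?_, ?_, ?_, h.neRoot⟩
    · intro t ht
      refine Finset.mem_erase.mpr ⟨?_, h.memV t ht⟩
      intro heq
      have := h.outdeg0 t ht
      rw [heq, hout] at this
      exact one_ne_zero this
    · intro t ht
      show Finset.card _ ≤ 1
      rw [Finset.filter_union]
      refine le_trans (Finset.card_union_le _ _) ?_
      rw [hprod]
      by_cases hft : f₀.2 = A.label t
      · -- the in-edge of (label t) was (v, label t); it is removed by the filter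
        have hvt : (v, A.label t) ∈ A.E := by
          rw [← hft, ← hf₀E.2]; exact hf₀E.1
        have hfilt : (A.E.filter (fun e => e.1 ≠ v ∧ e.2 ≠ v)).filter
            (fun e => e.2 = A.label t) = ∅ := by
          rw [Finset.eq_empty_iff_forall_notMem]
          intro e he
          simp only [Finset.mem_filter] at he
          obtain ⟨⟨heE, hne1, hne2⟩, hesnd⟩ := he
          have := edge_unique A (h.indeg1 t ht) hvt e heE hesnd
          rw [this] at hne1
          exact hne1 rfl
        rw [hfilt]
        simpa using Finset.card_filter_le {(e₀.1, f₀.2)} _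
      · have hsing : ({(e₀.1, f₀.2)} : Finset (ℕ × ℕ)).filter
            (fun e => e.2 = A.label t) = ∅ := by
          rw [Finset.eq_empty_iff_forall_notMem]
          intro e he
          simp only [Finset.mem_filter, Finset.mem_singleton] at he
          rw [he.1] at he
          exact hft he.2
        rw [hsing, Finset.card_empty, Nat.add_zero]
        have hle := h.indeg1 t ht
        rw [indeg] at hle
        exact le_trans (Finset.card_le_card
          (Finset.filter_subset_filter _ (Finset.filter_subset _ _))) hle
    · intro t ht
      show Finset.card _ = 0
      rw [Finset.card_eq_zero, Finset.filter_union, Finset.union_eq_empty]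
      constructor
      · rw [Finset.eq_empty_iff_forall_notMem]
        intro e he
        simp only [Finset.mem_filter] at he
        exact no_out A (h.outdeg0 t ht) e he.1.1 he.2
      · rw [hprod, Finset.eq_empty_iff_forall_notMem]
        intro e he
        simp only [Finset.mem_filter, Finset.mem_singleton] at he
        apply no_out A (h.outdeg0 t ht) e₀ he₀E.1
        rw [he.1] at he
        exact he.2

lemma inv_delEdge {N A : Network X} (h : Inv N A) (e : ℕ × ℕ) : Inv N (A.delEdge e) := by
  have hsub : (A.delEdge e).E ⊆ A.E := Finset.erase_subset _ _
  exact ⟨h.labN, h.rootN, h.taxaN, h.memV,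
    fun t ht => indeg_le_of_subset hsub (h.indeg1 t ht),
    fun t ht => outdeg_eq_zero_of_subset hsub (h.outdeg0 t ht), h.neRoot⟩

lemma inv_reducePair {N A : Network X} (hinj : Set.InjOn N.label ↑N.taxa)
    (h : Inv N A) (c : X × X) : Inv N (A.reducePair c) := by
  unfold reducePair
  split
  case isTrue hc =>
    apply inv_suppress
    have hsub : (A.E.filter (fun e => e.1 ≠ A.label c.1 ∧ e.2 ≠ A.label c.1)) ⊆ A.E :=
      Finset.filter_subset _ _
    refine ⟨h.labN, h.rootN, (Finset.erase_subset _ _).trans h.taxaN, ?_, ?_, ?_, ?_⟩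
    · intro t ht
      obtain ⟨htne, htA⟩ := Finset.mem_erase.mp ht
      refine Finset.mem_erase.mpr ⟨?_, h.memV t htA⟩
      show A.label t ≠ A.label c.1
      rw [h.labN]
      exact fun heq => htne (hinj (h.taxaN htA) (h.taxaN hc.1) heq)
    · intro t ht
      exact indeg_le_of_subset hsub (h.indeg1 t (Finset.mem_erase.mp ht).2)
    · intro t ht
      exact outdeg_eq_zero_of_subset hsub (h.outdeg0 t (Finset.mem_erase.mp ht).2)
    · intro t ht
      exact h.neRoot t (Finset.mem_erase.mp ht).2
  case isFalse =>
    split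
    case isTrue => exact inv_suppress (inv_suppress (inv_delEdge h _) _) _
    case isFalse => exact h

lemma inv_reduceSeq {N A : Network X} (hinj : Set.InjOn N.label ↑N.taxa)
    (h : Inv N A) (T : List (X × X)) : Inv N (A.reduceSeq T) := by
  induction T generalizing A with
  | nil => exact h
  | cons c T ih => exact ih (inv_reducePair hinj h c)

/-- In a single-leaf network all taxa coincide. -/
lemma taxa_unique_of_singleLeaf {N A : Network X} (hinj : Set.InjOn N.label ↑N.taxa)
    (h : Inv N A) (hs : A.IsSingleLeaf) {t s : X} (ht : t ∈ A.taxa) (hs' : s ∈ A.taxa) :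
    t = s := by
  obtain ⟨x₀, hx₀, hV, _, _⟩ := hs
  have key : ∀ u ∈ A.taxa, u = x₀ := by
    intro u hu
    have h1 : A.label u ∈ A.V := h.memV u hu
    rw [hV, Finset.mem_insert, Finset.mem_singleton] at h1
    rcases h1 with h1 | h1
    · exact absurd h1 (h.neRoot u hu)
    · rw [h.labN] at h1
      exact hinj (h.taxaN hu) (h.taxaN hx₀) h1
  rw [key t ht, key s hs']

end Network
namespace Network

variable {X : Type}

/-! ### Renaming machinery -/

lemma mem_image_inj {α β : Type*} [DecidableEq β] {f : α → β} (hf : Function.Injective f)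
    {s : Finset α} {a : α} : f a ∈ s.image f ↔ a ∈ s := by
  constructor
  · intro h
    obtain ⟨b, hb, hba⟩ := Finset.mem_image.mp h
    rwa [← hf hba]
  · exact fun h => Finset.mem_image_of_mem f h

lemma image_prodMap {α β : Type*} [DecidableEq α] [DecidableEq β]
    (s : Finset α) (t : Finset β) (f : α → α) (g : β → β) :
    (s ×ˢ t).image (Prod.map f g) = (s.image f) ×ˢ (t.image g) := by
  ext ⟨a, b⟩
  simp only [Finset.mem_image, Finset.mem_product, Prod.exists, Prod.map]
  constructor
  · rintro ⟨c, d, ⟨hc, hd⟩, h⟩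
    simp only [Prod.mk.injEq] at h
    exact ⟨⟨c, hc, h.1⟩, ⟨d, hd, h.2⟩⟩
  · rintro ⟨⟨c, hc, rfl⟩, ⟨d, hd, rfl⟩⟩
    exact ⟨c, d, ⟨hc, hd⟩, rfl⟩

lemma prodMap_injective (τ : ℕ ≃ ℕ) : Function.Injective (Prod.map τ τ) :=
  Prod.map_injective.mpr ⟨τ.injective, τ.injective⟩

/-- The relation stating that `B` is obtained from `A` by renaming vertices
along `τ` and taxa along `σ`, in a way compatible with the labelling of `N`. -/
structure Rel (N : Network X) (τ : ℕ ≃ ℕ) (σ : X ≃ X) (A B : Network X) : Prop where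
  labA : A.label = N.label
  labB : B.label = N.label
  hV : B.V = A.V.image τ
  hE : B.E = A.E.image (Prod.map τ τ)
  hroot : B.root = τ A.root
  htaxa : B.taxa = A.taxa.image σ
  compat : ∀ t ∈ A.taxa, N.label (σ t) = τ (N.label t)

namespace Rel

variable {N : Network X} {τ : ℕ ≃ ℕ} {σ : X ≃ X} {A B : Network X}

lemma mem_E (h : Rel N τ σ A B) {a b : ℕ} : (τ a, τ b) ∈ B.E ↔ (a, b) ∈ A.E := by
  rw [h.hE]
  exact mem_image_inj (prodMap_injective τ) (s := A.E) (a := (a, b))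

lemma mem_V (h : Rel N τ σ A B) {v : ℕ} : τ v ∈ B.V ↔ v ∈ A.V := by
  rw [h.hV]; exact mem_image_inj τ.injective

lemma mem_taxa (h : Rel N τ σ A B) {t : X} : σ t ∈ B.taxa ↔ t ∈ A.taxa := by
  rw [h.htaxa]; exact mem_image_inj σ.injective

lemma filter_E (h : Rel N τ σ A B) (p : ℕ × ℕ → Prop) [DecidablePred p] :
    B.E.filter p = (A.E.filter (fun e => p (Prod.map τ τ e))).image (Prod.map τ τ) := by
  rw [h.hE, Finset.filter_image]

lemma indeg (h : Rel N τ σ A B) (v : ℕ) : B.indeg (τ v) = A.indeg v := by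
  unfold Network.indeg
  rw [h.filter_E]
  rw [Finset.card_image_of_injective _ (prodMap_injective τ)]
  congr 1
  apply Finset.filter_congr
  intro e _
  show τ e.2 = τ v ↔ e.2 = v
  exact ⟨fun he => τ.injective he, fun he => he ▸ rfl⟩

lemma outdeg (h : Rel N τ σ A B) (v : ℕ) : B.outdeg (τ v) = A.outdeg v := by
  unfold Network.outdeg
  rw [h.filter_E]
  rw [Finset.card_image_of_injective _ (prodMap_injective τ)]
  congr 1
  apply Finset.filter_congr
  intro e _
  show τ e.1 = τ v ↔ e.1 = v
  exact ⟨fun he => τ.injective he, fun he => he ▸ rfl⟩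

lemma filter_snd_eq (h : Rel N τ σ A B) (v : ℕ) :
    A.E.filter (fun e => (Prod.map τ τ e).2 = τ v) = A.E.filter (fun e => e.2 = v) := by
  apply Finset.filter_congr
  intro e _
  show τ e.2 = τ v ↔ e.2 = v
  exact τ.injective.eq_iff

lemma filter_fst_eq (h : Rel N τ σ A B) (v : ℕ) :
    A.E.filter (fun e => (Prod.map τ τ e).1 = τ v) = A.E.filter (fun e => e.1 = v) := by
  apply Finset.filter_congr
  intro e _
  show τ e.1 = τ v ↔ e.1 = v
  exact τ.injective.eq_iff

lemma parents (h : Rel N τ σ A B) (v : ℕ) : B.parents (τ v) = (A.parents v).image τ := by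
  unfold Network.parents
  rw [h.filter_E, h.filter_snd_eq, Finset.image_image, Finset.image_image]
  rfl

lemma children (h : Rel N τ σ A B) (v : ℕ) : B.children (τ v) = (A.children v).image τ := by
  unfold Network.children
  rw [h.filter_E, h.filter_fst_eq, Finset.image_image, Finset.image_image]
  rfl

lemma theParent_both (h : Rel N τ σ A B) {v q : ℕ} (hdeg : A.indeg v ≤ 1)
    (he : (q, v) ∈ A.E) : A.theParent v = q ∧ B.theParent (τ v) = τ q :=
  ⟨theParent_eq A hdeg he,
    theParent_eq B (h.indeg v ▸ hdeg) (h.mem_E.mpr he)⟩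

lemma isRetic (h : Rel N τ σ A B) (v : ℕ) : B.IsRetic (τ v) ↔ A.IsRetic v := by
  unfold IsRetic; rw [h.indeg, h.outdeg]

lemma isTreeNode (h : Rel N τ σ A B) (v : ℕ) : B.IsTreeNode (τ v) ↔ A.IsTreeNode v := by
  unfold IsTreeNode; rw [h.indeg, h.outdeg]

lemma symm (h : Rel N τ σ A B) : Rel N τ.symm σ.symm B A := by
  refine ⟨h.labB, h.labA, ?_, ?_, ?_, ?_, ?_⟩
  · rw [h.hV, Finset.image_image]
    simp
  · rw [h.hE, Finset.image_image]
    have : (Prod.map ⇑τ.symm ⇑τ.symm) ∘ (Prod.map ⇑τ ⇑τ) = id := by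
      funext e; simp [Prod.map]
    rw [this, Finset.image_id]
  · rw [h.hroot]; simp
  · rw [h.htaxa, Finset.image_image]
    simp
  · intro t ht
    rw [h.htaxa] at ht
    obtain ⟨s, hs, rfl⟩ := Finset.mem_image.mp ht
    rw [Equiv.symm_apply_apply]
    have := h.compat s hs
    rw [this, Equiv.symm_apply_apply]

lemma labelB (h : Rel N τ σ A B) {t : X} (ht : t ∈ A.taxa) :
    B.label (σ t) = τ (A.label t) := by
  rw [h.labB, h.labA]; exact h.compat t ht

lemma isCherry_of (h : Rel N τ σ A B) {a b : X} (hc : A.IsCherry a b) :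
    B.IsCherry (σ a) (σ b) := by
  obtain ⟨ha, hb, hab, q, hqa, hqb⟩ := hc
  refine ⟨h.mem_taxa.mpr ha, h.mem_taxa.mpr hb, σ.injective.ne hab, τ q, ?_, ?_⟩
  · rw [h.labelB ha]; exact h.mem_E.mpr hqa
  · rw [h.labelB hb]; exact h.mem_E.mpr hqb

lemma isCherry_iff (h : Rel N τ σ A B) (a b : X) :
    B.IsCherry (σ a) (σ b) ↔ A.IsCherry a b := by
  constructor
  · intro hc
    have := h.symm.isCherry_of hc
    simpa using this
  · exact h.isCherry_of

lemma isRetCherry_of (h : Rel N τ σ A B) {a b : X} (hc : A.IsRetCherry a b) :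
    B.IsRetCherry (σ a) (σ b) := by
  obtain ⟨ha, hb, hab, px, py, hpx, hpy, hr, ht, hpp⟩ := hc
  refine ⟨h.mem_taxa.mpr ha, h.mem_taxa.mpr hb, σ.injective.ne hab, τ px, τ py, ?_, ?_,
    (h.isRetic px).mpr hr, (h.isTreeNode py).mpr ht, h.mem_E.mpr hpp⟩
  · rw [h.labelB ha]; exact h.mem_E.mpr hpx
  · rw [h.labelB hb]; exact h.mem_E.mpr hpy

lemma isRetCherry_iff (h : Rel N τ σ A B) (a b : X) :
    B.IsRetCherry (σ a) (σ b) ↔ A.IsRetCherry a b := by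
  constructor
  · intro hc
    have := h.symm.isRetCherry_of hc
    simpa using this
  · exact h.isRetCherry_of

lemma suppress (h : Rel N τ σ A B) (v : ℕ) :
    Rel N τ σ (A.suppress v) (B.suppress (τ v)) := by
  unfold Network.suppress
  rw [h.indeg, h.outdeg]
  split
  case isFalse => exact h
  case isTrue hc =>
    refine ⟨h.labA, h.labB, ?_, ?_, h.hroot, h.htaxa, h.compat⟩
    · show B.V.erase (τ v) = (A.V.erase v).image τ
      rw [h.hV, Finset.image_erase τ.injective]
    · show B.E.filter _ ∪ _ = _
      have hfil : A.E.filter (fun e => (Prod.map τ τ e).1 ≠ τ v ∧ (Prod.map τ τ e).2 ≠ τ v)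
          = A.E.filter (fun e => e.1 ≠ v ∧ e.2 ≠ v) := by
        apply Finset.filter_congr
        intro e _
        show (τ e.1 ≠ τ v ∧ τ e.2 ≠ τ v) ↔ (e.1 ≠ v ∧ e.2 ≠ v)
        simp [τ.injective.ne_iff]
      rw [Finset.image_union, h.filter_E, h.parents, h.children, ← image_prodMap, hfil]

lemma delEdge (h : Rel N τ σ A B) (a b : ℕ) :
    Rel N τ σ (A.delEdge (a, b)) (B.delEdge (τ a, τ b)) := by
  refine ⟨h.labA, h.labB, h.hV, ?_, h.hroot, h.htaxa, h.compat⟩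
  show B.E.erase (τ a, τ b) = (A.E.erase (a, b)).image (Prod.map τ τ)
  rw [h.hE, Finset.image_erase (prodMap_injective τ)]
  rfl

lemma reducePair (h : Rel N τ σ A B) (hInv : Inv N A) (c : X × X) :
    Rel N τ σ (A.reducePair c) (B.reducePair (σ c.1, σ c.2)) := by
  by_cases h1 : A.IsCherry c.1 c.2
  · have h1' : B.IsCherry (σ c.1) (σ c.2) := h.isCherry_of h1
    unfold Network.reducePair
    rw [if_pos h1, if_pos h1']
    obtain ⟨hc1, hc2, hcc, q, hq1, hq2⟩ := h1
    have hdeg : A.indeg (A.label c.1) ≤ 1 := hInv.indeg1 c.1 hc1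
    obtain ⟨hPA, hPB⟩ := h.theParent_both hdeg hq1
    have hlab : B.label (σ c.1, σ c.2).1 = τ (A.label c.1) := h.labelB hc1
    rw [hlab, hPA, hPB]
    apply Rel.suppress
    refine ⟨h.labA, h.labB, ?_, ?_, h.hroot, ?_, ?_⟩
    · show B.V.erase (τ (A.label c.1)) = (A.V.erase (A.label c.1)).image τ
      rw [h.hV, Finset.image_erase τ.injective]
    · show B.E.filter (fun e => e.1 ≠ τ (A.label c.1) ∧ e.2 ≠ τ (A.label c.1))
        = (A.E.filter (fun e => e.1 ≠ A.label c.1 ∧ e.2 ≠ A.label c.1)).image (Prod.map τ τ)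
      have hfil : A.E.filter (fun e => (Prod.map τ τ e).1 ≠ τ (A.label c.1) ∧
            (Prod.map τ τ e).2 ≠ τ (A.label c.1))
          = A.E.filter (fun e => e.1 ≠ A.label c.1 ∧ e.2 ≠ A.label c.1) := by
        apply Finset.filter_congr
        intro e _
        show (τ e.1 ≠ τ _ ∧ τ e.2 ≠ τ _) ↔ _
        simp [τ.injective.ne_iff]
      rw [h.filter_E, hfil]
    · show B.taxa.erase (σ c.1, σ c.2).1 = (A.taxa.erase c.1).image σ
      show B.taxa.erase (σ c.1) = (A.taxa.erase c.1).image σ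
      rw [h.htaxa, Finset.image_erase σ.injective]
    · intro t ht
      exact h.compat t (Finset.mem_erase.mp ht).2
  · have h1' : ¬ B.IsCherry (σ c.1) (σ c.2) := fun hc => h1 ((h.isCherry_iff c.1 c.2).mp hc)
    by_cases h2 : A.IsRetCherry c.1 c.2
    · have h2' : B.IsRetCherry (σ c.1) (σ c.2) := h.isRetCherry_of h2
      unfold Network.reducePair
      rw [if_neg h1, if_pos h2, if_neg h1', if_pos h2']
      obtain ⟨hc1, hc2, hcc, px, py, hpx, hpy, _, _, _⟩ := h2
      obtain ⟨hPA1, hPB1⟩ := h.theParent_both (hInv.indeg1 c.1 hc1) hpx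
      obtain ⟨hPA2, hPB2⟩ := h.theParent_both (hInv.indeg1 c.2 hc2) hpy
      have hl1 : B.label (σ c.1, σ c.2).1 = τ (A.label c.1) := h.labelB hc1
      have hl2 : B.label (σ c.1, σ c.2).2 = τ (A.label c.2) := h.labelB hc2
      rw [hl1, hl2, hPA1, hPA2, hPB1, hPB2]
      exact ((h.delEdge py px).suppress py).suppress px
    · have h2' : ¬ B.IsRetCherry (σ c.1) (σ c.2) :=
        fun hc => h2 ((h.isRetCherry_iff c.1 c.2).mp hc)
      rw [reducePair_of_not A c h1 h2, reducePair_of_not B _ h1' h2']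
      exact h

lemma reduceSeq (h : Rel N τ σ A B) (hinj : Set.InjOn N.label ↑N.taxa)
    (hInv : Inv N A) (T : List (X × X)) :
    Rel N τ σ (A.reduceSeq T) (B.reduceSeq (T.map (fun q => (σ q.1, σ q.2)))) := by
  induction T generalizing A B with
  | nil => exact h
  | cons c T ih =>
      rw [List.map_cons, reduceSeq_cons, reduceSeq_cons]
      exact ih (h.reducePair hInv c) (inv_reducePair hinj hInv c)

lemma singleLeaf (h : Rel N τ σ A B) (hs : A.IsSingleLeaf) : B.IsSingleLeaf := by
  obtain ⟨x₀, hx₀, hV, hE, hne⟩ := hs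
  refine ⟨σ x₀, h.mem_taxa.mpr hx₀, ?_, ?_, ?_⟩
  · rw [h.hV, hV, h.hroot, h.labelB hx₀]
    rw [Finset.image_insert, Finset.image_singleton]
  · rw [h.hE, hE, h.hroot, h.labelB hx₀, Finset.image_singleton]
    rfl
  · rw [h.hroot, h.labelB hx₀]
    exact τ.injective.ne hne

end Rel

lemma net_ext {A B : Network X} (h1 : A.V = B.V) (h2 : A.E = B.E) (h3 : A.root = B.root)
    (h4 : A.taxa = B.taxa) (h5 : A.label = B.label) : A = B := by
  cases A; cases B; simp_all

namespace Rel

variable {N : Network X} {τ : ℕ ≃ ℕ} {σ : X ≃ X} {A B : Network X}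

lemma eq_iff {A' B' : Network X} (h : Rel N τ σ A B) (h' : Rel N τ σ A' B') :
    A = A' ↔ B = B' := by
  constructor
  · intro he
    refine net_ext ?_ ?_ ?_ ?_ ?_
    · rw [h.hV, h'.hV, he]
    · rw [h.hE, h'.hE, he]
    · rw [h.hroot, h'.hroot, he]
    · rw [h.htaxa, h'.htaxa, he]
    · rw [h.labB, h'.labB]
  · intro he
    refine net_ext ?_ ?_ ?_ ?_ ?_
    · rw [h.symm.hV, he, ← h'.symm.hV]
    · rw [h.symm.hE, he, ← h'.symm.hE]
    · rw [h.symm.hroot, he, ← h'.symm.hroot]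
    · rw [h.symm.htaxa, he, ← h'.symm.htaxa]
    · rw [h.labA, h'.labA]

end Rel

end Network
namespace Network

variable {X : Type}

lemma take_append_len {α : Type*} (l₁ l₂ : List α) (n : ℕ) :
    (l₁ ++ l₂).take (l₁.length + n) = l₁ ++ l₂.take n := by
  simp [List.take_append]

lemma drop_append_len {α : Type*} (l₁ l₂ : List α) (n : ℕ) :
    (l₁ ++ l₂).drop (l₁.length + n) = l₂.drop n := by
  simp [List.drop_append]

lemma take_append_le {α : Type*} (l₁ l₂ : List α) {n : ℕ} (h : n ≤ l₁.length) :
    (l₁ ++ l₂).take n = l₁.take n := by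
  simp [List.take_append, Nat.sub_eq_zero_of_le h, h]

lemma drop_append_le {α : Type*} (l₁ l₂ : List α) {n : ℕ} (h : n ≤ l₁.length) :
    (l₁ ++ l₂).drop n = l₁.drop n ++ l₂ := by
  simp [List.drop_append, Nat.sub_eq_zero_of_le h]

lemma take_succ_eq {α : Type*} (l : List α) {k : ℕ} (h : k < l.length) :
    l.take (k+1) = l.take k ++ [l[k]] := by
  rw [List.take_succ, List.getElem?_eq_getElem h]; rfl

lemma getLast?_map' {α : Type*} (f : α → α) (l : List α) :
    (l.map f).getLast? = l.getLast?.map f := by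
  induction l using List.reverseRecOn <;> simp

lemma reduceSeq_singleton (N : Network X) (c : X × X) :
    N.reduceSeq [c] = N.reducePair c := rfl

/-- A taxon never picked as a first coordinate and an acting last pair must
coincide with the final leaf. -/
lemma last_snd_mem {A : Network X} {T : List (X × X)} (hT : T ≠ [])
    (hne : A.reduceSeq T ≠ A.reduceSeq T.dropLast) :
    (T.getLast hT).2 ∈ (A.reduceSeq T).taxa := by
  have hsplit : T.dropLast ++ [T.getLast hT] = T := List.dropLast_append_getLast hT
  have heq : A.reduceSeq T = (A.reduceSeq T.dropLast).reducePair (T.getLast hT) := by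
    conv_lhs => rw [← hsplit]
    rw [reduceSeq_append, reduceSeq_singleton]
  rw [heq] at hne ⊢
  exact snd_mem_taxa_of_change _ _ hne

end Network
namespace Network

variable {X : Type}

lemma get_of_getElem? {α : Type*} (l : List α) (j : ℕ) (hj : j < l.length) (v : α)
    (h : l[j]? = some v) : l.get ⟨j, hj⟩ = v := by
  rw [List.get_eq_getElem]
  have h2 := List.getElem?_eq_getElem hj
  exact Option.some.inj (h2.symm.trans h)

lemma reducePair_cherry_snd_irrel (N : Network X) (a b c : X)
    (h1 : N.IsCherry a b) (h2 : N.IsCherry a c) :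
    N.reducePair (a, b) = N.reducePair (a, c) := by
  unfold reducePair
  rw [if_pos h1, if_pos h2]

end Network
/-- if `S` is a minimal CPS for the CPN `N` whose `i`-th pair
`(x,y)` reduces a cherry, and `z, w` are distinct leaves sharing the common
parent of `x` and `y` at that step, then replacing the `i`-th pair by `(z,w)`
and substituting `x` for `z` in the remainder gives another minimal CPS
for `N`. -/
theorem cherry_swap_gives_minimal_CPS (X : Type) (N : Network X)
    (hN : N.IsCPN) (S : List (X × X)) (hS : IsMinimalCPS S N)
    (i : ℕ) (hi : i < S.length) (x y : X) (hSi : S.get ⟨i, hi⟩ = (x, y))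
    (M : Network X) (hM : M = N.reduceSeq (S.take i))
    (hcherry : M.IsCherry x y)
    (z w : X) (hzw : z ≠ w) (hz : z ∈ M.taxa) (hw : w ∈ M.taxa)
    (p : ℕ)
    (hpx : (p, M.label x) ∈ M.E) (hpy : (p, M.label y) ∈ M.E)
    (hpz : (p, M.label z) ∈ M.E) (hpw : (p, M.label w) ∈ M.E) :
    IsMinimalCPS
      (S.take i ++ (z, w) ::
        (S.drop (i + 1)).map (fun q =>
          ((if q.1 = z then x else q.1), (if q.2 = z then x else q.2)))) N := by

  classical
  obtain ⟨hphylo, -⟩ := hN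
  have hinj : Set.InjOn N.label ↑N.taxa := hphylo.2.2.2.2.1
  obtain ⟨hCPS, hRed, hMin⟩ := hS
  rw [List.get_eq_getElem] at hSi
  set P := S.take i with hP
  set D := S.drop (i + 1) with hD
  have hPlen : P.length = i := by
    simp [hP, le_of_lt hi]
  have hsplit : S = P ++ (x, y) :: D := by
    conv_lhs => rw [← List.take_append_drop i S, List.drop_eq_getElem_cons hi, hSi]
  have hSlen : S.length = i + 1 + D.length := by
    conv_lhs => rw [hsplit]
    simp [hPlen]; omega
  have hMP : N.reduceSeq P = M := hM.symm
  have hInvM : Inv N M := by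
    rw [hM]; exact inv_reduceSeq hinj (inv_self N hphylo) P
  have hlab : M.label = N.label := hInvM.labN
  rw [hlab] at hpx hpy hpz hpw
  obtain ⟨hx, hy, hxy, -⟩ := hcherry
  have hxN : x ∈ N.taxa := hInvM.taxaN hx
  have hyN : y ∈ N.taxa := hInvM.taxaN hy
  have hzN : z ∈ N.taxa := hInvM.taxaN hz
  have hwN : w ∈ N.taxa := hInvM.taxaN hw
  have hdx : M.indeg (N.label x) ≤ 1 := hlab ▸ hInvM.indeg1 x hx
  have hdz : M.indeg (N.label z) ≤ 1 := hlab ▸ hInvM.indeg1 z hz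
  have hox : M.outdeg (N.label x) = 0 := hlab ▸ hInvM.outdeg0 x hx
  have hoz : M.outdeg (N.label z) = 0 := hlab ▸ hInvM.outdeg0 z hz
  have hczw : M.IsCherry z w := ⟨hz, hw, hzw, p, hlab ▸ hpz, hlab ▸ hpw⟩
  -- the renamings
  set τ : ℕ ≃ ℕ := Equiv.swap (N.label x) (N.label z) with hτdef
  set σ : X ≃ X := Equiv.swap x z with hσdef
  have hσx : σ x = z := Equiv.swap_apply_left x z
  have hσz : σ z = x := Equiv.swap_apply_right x z
  have hσfix : ∀ t : X, t ≠ x → t ≠ z → σ t = t := fun t h1 h2 =>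
    Equiv.swap_apply_of_ne_of_ne h1 h2
  have hτx : τ (N.label x) = N.label z := Equiv.swap_apply_left _ _
  have hτz : τ (N.label z) = N.label x := Equiv.swap_apply_right _ _
  have hτfix : ∀ u : ℕ, u ≠ N.label x → u ≠ N.label z → τ u = u := fun u h1 h2 =>
    Equiv.swap_apply_of_ne_of_ne h1 h2
  have hpne_x : p ≠ N.label x := no_out M hox _ hpx
  have hpne_z : p ≠ N.label z := no_out M hoz _ hpz
  have hτp : τ p = p := hτfix p hpne_x hpne_z
  -- τ, σ fix M setwise
  have hVmap : ∀ u ∈ M.V, τ u ∈ M.V := by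
    intro u hu
    by_cases h1 : u = N.label x
    · rw [h1, hτx, ← hlab]; exact hInvM.memV z hz
    by_cases h2 : u = N.label z
    · rw [h2, hτz, ← hlab]; exact hInvM.memV x hx
    · rw [hτfix u h1 h2]; exact hu
  have hEmap : ∀ e ∈ M.E, Prod.map τ τ e ∈ M.E := by
    intro e he
    by_cases h2x : e.2 = N.label x
    · have := edge_unique M hdx hpx e he h2x
      rw [this]
      show (τ p, τ (N.label x)) ∈ M.E
      rw [hτp, hτx]; exact hpz
    by_cases h2z : e.2 = N.label z
    · have := edge_unique M hdz hpz e he h2z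
      rw [this]
      show (τ p, τ (N.label z)) ∈ M.E
      rw [hτp, hτz]; exact hpx
    · have h1x : e.1 ≠ N.label x := no_out M hox e he
      have h1z : e.1 ≠ N.label z := no_out M hoz e he
      have : Prod.map τ τ e = e := by
        show (τ e.1, τ e.2) = e
        rw [hτfix e.1 h1x h1z, hτfix e.2 h2x h2z]
      rw [this]; exact he
  have htmap : ∀ t ∈ M.taxa, σ t ∈ M.taxa := by
    intro t ht
    by_cases h1 : t = x
    · rw [h1, hσx]; exact hz
    by_cases h2 : t = z
    · rw [h2, hσz]; exact hx
    · rw [hσfix t h1 h2]; exact ht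
  have fix_finset : ∀ {β : Type} [DecidableEq β] (f : β → β) (s : Finset β),
      Function.Injective f → (∀ a ∈ s, f a ∈ s) → s.image f = s := by
    intro β _ f s hf hmap
    apply Finset.eq_of_subset_of_card_le
    · intro a ha
      obtain ⟨b, hb, rfl⟩ := Finset.mem_image.mp ha
      exact hmap b hb
    · rw [Finset.card_image_of_injective _ hf]
  have RelM : Rel N τ σ M M := by
    refine ⟨hlab, hlab, ?_, ?_, ?_, ?_, ?_⟩
    · exact (fix_finset τ M.V τ.injective hVmap).symm
    · exact (fix_finset (Prod.map τ τ) M.E (prodMap_injective τ) hEmap).symm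
    · refine (hτfix M.root ?_ ?_).symm
      · intro h
        apply hInvM.neRoot x hx
        rw [hlab, ← h]
      · intro h
        apply hInvM.neRoot z hz
        rw [hlab, ← h]
    · exact (fix_finset σ M.taxa σ.injective htmap).symm
    · intro t ht
      by_cases h1 : t = x
      · rw [h1, hσx, hτx]
      by_cases h2 : t = z
      · rw [h2, hσz, hτz]
      · rw [hσfix t h1 h2, hτfix (N.label t)
          (fun hc => h1 (hinj (hInvM.taxaN ht) hxN hc))
          (fun hc => h2 (hinj (hInvM.taxaN ht) hzN hc))]
    -- the two reduced networks at step i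
  set M₁ := M.reducePair (x, y) with hM₁def
  set M₁' := M.reducePair (z, w) with hM₁'def
  have hInvM₁ : Inv N M₁ := inv_reducePair hinj hInvM (x, y)
  have hcxy : M.IsCherry x y := ⟨hx, hy, hxy, p, hlab ▸ hpx, hlab ▸ hpy⟩
  have hσy : M.reducePair (σ x, σ y) = M₁' := by
    rw [hσx, hM₁'def]
    by_cases h1 : y = z
    · have hyx : σ y = x := by rw [h1, hσz]
      rw [hyx]
      exact reducePair_cherry_snd_irrel M z x w
        ⟨hz, hx, fun he => hxy (by rw [h1, he]), p, hlab ▸ hpz, hlab ▸ hpx⟩ hczw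
    · have hyy : σ y = y := hσfix y (fun hc => hxy hc.symm) h1
      rw [hyy]
      exact reducePair_cherry_snd_irrel M z y w
        ⟨hz, hy, fun he => h1 he.symm, p, hlab ▸ hpz, hlab ▸ hpy⟩ hczw
  have RelStep : Rel N τ σ M₁ M₁' := by
    have h0 := RelM.reducePair hInvM (x, y)
    have h1 : M.reducePair (σ (x,y).1, σ (x,y).2) = M₁' := hσy
    rw [h1] at h0
    rw [hM₁def]
    exact h0
  have hM₁taxa : M₁.taxa = M.taxa.erase x := by
    rw [hM₁def]; exact reducePair_taxa_cherry M (x, y) hcxy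
  have hM₁'taxa : M₁'.taxa = M.taxa.erase z := by
    rw [hM₁'def]; exact reducePair_taxa_cherry M (z, w) hczw
  -- prefix computations
  have htake : ∀ k : ℕ, S.take (i + 1 + k) = P ++ (x, y) :: D.take k := by
    intro k
    conv_lhs => rw [hsplit]
    rw [show i + 1 + k = P.length + (1 + k) by omega, take_append_len,
      show 1 + k = k + 1 by omega, List.take_succ_cons]
  have hAk : ∀ k : ℕ, N.reduceSeq (S.take (i + 1 + k)) = M₁.reduceSeq (D.take k) := by
    intro k
    rw [htake k, reduceSeq_append, hMP, reduceSeq_cons]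
  -- the final network and uniqueness of the remaining taxon
  have hRedM : (M₁.reduceSeq D).IsSingleLeaf := by
    have h0 : (N.reduceSeq S).IsSingleLeaf := hRed
    rw [hsplit, reduceSeq_append, hMP, reduceSeq_cons] at h0
    exact h0
  have hInvFin : Inv N (M₁.reduceSeq D) := inv_reduceSeq hinj hInvM₁ D
  have huniq : ∀ a ∈ (M₁.reduceSeq D).taxa, ∀ b ∈ (M₁.reduceSeq D).taxa, a = b :=
    fun a ha b hb => taxa_unique_of_singleLeaf hinj hInvFin hRedM ha hb
  -- x never occurs in D
  have hxfreeIdx : ∀ k, (hk : k < D.length) → D[k].1 ≠ x ∧ D[k].2 ≠ x := by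
    intro k hk
    have hch : N.reduceSeq (S.take (i+1+k+1)) ≠ N.reduceSeq (S.take (i+1+k)) :=
      hMin (i+1+k) (by omega)
    rw [show i+1+k+1 = i+1+(k+1) by omega, hAk (k+1), hAk k, take_succ_eq D hk,
      reduceSeq_append, reduceSeq_singleton] at hch
    have hxnot : x ∉ (M₁.reduceSeq (D.take k)).taxa := by
      intro hmem
      have h2 := taxa_reduceSeq_subset M₁ (D.take k) hmem
      rw [hM₁taxa] at h2
      exact Finset.notMem_erase x M.taxa h2
    constructor
    · intro h1
      exact hch (reducePair_noop_fst _ _ (by rw [h1]; exact hxnot))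
    · intro h2
      exact hch (reducePair_noop_snd _ _ (by rw [h2]; exact hxnot))
  have hxfreeM : ∀ q ∈ D, q.1 ≠ x ∧ q.2 ≠ x := by
    intro q hq
    obtain ⟨k, hk, rfl⟩ := List.mem_iff_getElem.mp hq
    exact hxfreeIdx k hk
  -- rewrite the goal's substitution as the action of σ
  have hD'eq : D.map (fun q => ((if q.1 = z then x else q.1), (if q.2 = z then x else q.2)))
      = D.map (fun q => (σ q.1, σ q.2)) := by
    apply List.map_congr_left
    intro q hq
    obtain ⟨h1, h2⟩ := hxfreeM q hq
    have e1 : (if q.1 = z then x else q.1) = σ q.1 := by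
      by_cases hq1 : q.1 = z
      · rw [if_pos hq1, hq1, hσz]
      · rw [if_neg hq1, hσfix q.1 h1 hq1]
    have e2 : (if q.2 = z then x else q.2) = σ q.2 := by
      by_cases hq2 : q.2 = z
      · rw [if_pos hq2, hq2, hσz]
      · rw [if_neg hq2, hσfix q.2 h2 hq2]
    rw [e1, e2]
  rw [hD'eq]
  set D' := D.map (fun q => (σ q.1, σ q.2)) with hD'def
  have hD'len : D'.length = D.length := List.length_map ..
  have hS'len : (P ++ (z,w) :: D').length = S.length := by
    simp only [List.length_append, List.length_cons, hPlen, hD'len, hSlen]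
    omega
  have htake' : ∀ k : ℕ, (P ++ (z,w) :: D').take (i + 1 + k) = P ++ (z,w) :: D'.take k := by
    intro k
    rw [show i + 1 + k = P.length + (1 + k) by omega, take_append_len,
      show 1 + k = k + 1 by omega, List.take_succ_cons]
  have hBk : ∀ k : ℕ, N.reduceSeq ((P ++ (z,w) :: D').take (i+1+k))
      = M₁'.reduceSeq (D'.take k) := by
    intro k
    rw [htake' k, reduceSeq_append, hMP, reduceSeq_cons]
  have RelK : ∀ k : ℕ, Rel N τ σ (M₁.reduceSeq (D.take k)) (M₁'.reduceSeq (D'.take k)) := by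
    intro k
    have h0 := RelStep.reduceSeq hinj hInvM₁ (D.take k)
    rw [List.map_take] at h0
    exact h0
  have RelFull : Rel N τ σ (M₁.reduceSeq D) (M₁'.reduceSeq D') :=
    RelStep.reduceSeq hinj hInvM₁ D
  -- facts about the last pair of D
  have KFlast : ∀ (hDnil : D ≠ []) (t : X), t ∈ M₁.taxa → t ∉ D.map Prod.fst →
      (D.getLast hDnil).2 = t := by
    intro hDnil t ht hnt
    have hDpos : 0 < D.length := List.length_pos_iff.mpr hDnil
    have hchange : M₁.reduceSeq D ≠ M₁.reduceSeq D.dropLast := by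
      have h1 : N.reduceSeq (S.take (i+1+(D.length - 1))) = M₁.reduceSeq D.dropLast := by
        rw [hAk (D.length - 1), List.dropLast_eq_take]
      have h2 : N.reduceSeq (S.take (i+1+(D.length-1)+1)) = M₁.reduceSeq D := by
        rw [show i+1+(D.length-1)+1 = i+1+D.length by omega, hAk D.length, List.take_length]
      have h3 := hMin (i+1+(D.length-1)) (by omega)
      rw [h2, h1] at h3
      exact h3
    exact huniq _ (last_snd_mem hDnil hchange) _ (mem_taxa_reduceSeq M₁ D ht hnt)
  have KF0 : D = [] → (z = x ∧ w = y) ∨ (z = y ∧ w = x) := by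
    intro hDnil
    have huniq0 : ∀ a ∈ M₁.taxa, ∀ b ∈ M₁.taxa, a = b := by
      intro a ha b hb
      exact huniq a (by rw [hDnil, reduceSeq_nil]; exact ha)
        b (by rw [hDnil, reduceSeq_nil]; exact hb)
    have hyM₁ : y ∈ M₁.taxa := by
      rw [hM₁taxa]; exact Finset.mem_erase.mpr ⟨fun h => hxy h.symm, hy⟩
    by_cases hzx : z = x
    · left
      refine ⟨hzx, ?_⟩
      have hwx : w ≠ x := fun h => hzw (hzx.trans h.symm)
      have hwM₁ : w ∈ M₁.taxa := by rw [hM₁taxa]; exact Finset.mem_erase.mpr ⟨hwx, hw⟩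
      exact huniq0 w hwM₁ y hyM₁
    · have hzM₁ : z ∈ M₁.taxa := by rw [hM₁taxa]; exact Finset.mem_erase.mpr ⟨hzx, hz⟩
      have hzy : z = y := huniq0 z hzM₁ y hyM₁
      right
      refine ⟨hzy, ?_⟩
      by_cases hwx : w = x
      · exact hwx
      · exfalso
        have hwM₁ : w ∈ M₁.taxa := by rw [hM₁taxa]; exact Finset.mem_erase.mpr ⟨hwx, hw⟩
        exact hzw (hzy.trans (huniq0 y hyM₁ w hwM₁))
  -- getLast? computations
  have hSlastD : ∀ (hDnil : D ≠ []), S.getLast? = some (D.getLast hDnil) := by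
    intro hDnil
    conv_lhs => rw [hsplit]
    rw [List.getLast?_append_of_ne_nil _ (by simp : ((x,y) :: D : List (X × X)) ≠ []),
      show ((x,y) :: D : List (X × X)) = [(x,y)] ++ D from rfl,
      List.getLast?_append_of_ne_nil _ hDnil]
    exact List.getLast?_eq_getLast hDnil
  have hS'lastD : ∀ (hDnil : D ≠ []), (P ++ (z,w) :: D').getLast?
      = some (σ (D.getLast hDnil).1, σ (D.getLast hDnil).2) := by
    intro hDnil
    have hD'nil : D' ≠ [] := by rw [hD'def]; simp [hDnil]
    rw [List.getLast?_append_of_ne_nil _ (by simp : ((z,w) :: D' : List (X × X)) ≠ []),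
      show ((z,w) :: D' : List (X × X)) = [(z,w)] ++ D' from rfl,
      List.getLast?_append_of_ne_nil _ hD'nil, hD'def, getLast?_map',
      List.getLast?_eq_getLast hDnil]
    rfl
  have hSlast0 : D = [] → S.getLast? = some (x, y) := by
    intro hDnil
    conv_lhs => rw [hsplit, hDnil]
    rw [List.getLast?_append_of_ne_nil _ (by simp : ([(x,y)] : List (X × X)) ≠ [])]
    simp
  have hS'last0 : D = [] → (P ++ (z,w) :: D').getLast? = some (z, w) := by
    intro hDnil
    have hD'nil : D' = [] := by rw [hD'def, hDnil]; rfl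
    rw [hD'nil]
    rw [List.getLast?_append_of_ne_nil _ (by simp : ([(z,w)] : List (X × X)) ≠ [])]
    simp
  refine ⟨⟨?_, ?_⟩, ?_, ?_⟩
  · -- IsCPS : distinct components
    intro q hq
    rw [List.mem_append, List.mem_cons] at hq
    rcases hq with hq | rfl | hq
    · exact hCPS.1 q (List.take_subset i S hq)
    · exact hzw
    · obtain ⟨q₀, hq₀, rfl⟩ := List.mem_map.mp hq
      exact σ.injective.ne (hCPS.1 q₀ (List.drop_subset (i+1) S hq₀))
  · -- IsCPS : second coordinates reappear
    intro j hj
    have hjS : j < S.length := hS'len ▸ hj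
    rcases Nat.lt_trichotomy j i with hji | hji | hji
    · -- zone j < i
      have hjP : j < P.length := by omega
      have hget' : (P ++ (z,w) :: D').get ⟨j, hj⟩ = P[j] := by
        rw [List.get_eq_getElem]
        exact List.getElem_append_left hjP
      have hgetS : S.get ⟨j, hjS⟩ = P[j] := by
        apply get_of_getElem?
        conv_lhs => rw [hsplit]
        rw [List.getElem?_append_left hjP]
        exact List.getElem?_eq_getElem hjP
      have hcond := hCPS.2 j hjS
      rw [hgetS] at hcond
      rw [hget']
      have hdropS : S.drop (j+1) = P.drop (j+1) ++ (x,y) :: D := by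
        conv_lhs => rw [hsplit]
        exact drop_append_le _ _ (by omega)
      have hdropS' : (P ++ (z,w) :: D').drop (j+1) = P.drop (j+1) ++ (z,w) :: D' :=
        drop_append_le _ _ (by omega)
      rw [hdropS] at hcond
      rw [hdropS']
      simp only [List.map_append, List.map_cons, List.mem_append, List.mem_cons] at hcond ⊢
      rcases hcond with (hc | hc | hc) | ⟨r, hr, hbr⟩
      · exact Or.inl (Or.inl hc)
      · -- P[j].2 = x
        by_cases hzx : z = x
        · exact Or.inl (Or.inr (Or.inl (by rw [hc]; exact hzx.symm)))
        by_cases hDnil : D = []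
        · rcases KF0 hDnil with ⟨h1, h2⟩ | ⟨h1, h2⟩
          · exact absurd h1 hzx
          · exact Or.inr ⟨(z,w), hS'last0 hDnil, by rw [hc]; exact h2.symm⟩
        · by_cases hzf : z ∈ D.map Prod.fst
          · obtain ⟨q₀, hq₀, hq₀1⟩ := List.mem_map.mp hzf
            refine Or.inl (Or.inr (Or.inr ?_))
            refine List.mem_map.mpr ⟨(σ q₀.1, σ q₀.2), List.mem_map_of_mem hq₀, ?_⟩
            show σ q₀.1 = P[j].2
            rw [hq₀1, hσz, hc]
          · have hzM₁ : z ∈ M₁.taxa := by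
              rw [hM₁taxa]; exact Finset.mem_erase.mpr ⟨hzx, hz⟩
            have hlz := KFlast hDnil z hzM₁ hzf
            refine Or.inr ⟨(σ (D.getLast hDnil).1, σ (D.getLast hDnil).2),
              hS'lastD hDnil, ?_⟩
            show P[j].2 = σ (D.getLast hDnil).2
            rw [hlz, hσz, hc]
      · -- P[j].2 ∈ first components of D
        obtain ⟨q₀, hq₀, hq₀1⟩ := List.mem_map.mp hc
        by_cases hq0z : q₀.1 = z
        · exact Or.inl (Or.inr (Or.inl (by rw [← hq₀1]; exact hq0z)))
        · refine Or.inl (Or.inr (Or.inr ?_))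
          have hq0x : q₀.1 ≠ x := (hxfreeM q₀ hq₀).1
          refine List.mem_map.mpr ⟨(σ q₀.1, σ q₀.2), List.mem_map_of_mem hq₀, ?_⟩
          show σ q₀.1 = P[j].2
          rw [hσfix q₀.1 hq0x hq0z, hq₀1]
      · -- last-pair clause of S
        by_cases hDnil : D = []
        · rw [hSlast0 hDnil] at hr
          injection hr with hr
          rw [← hr] at hbr
          rcases KF0 hDnil with ⟨h1, h2⟩ | ⟨h1, h2⟩
          · exact Or.inr ⟨(z,w), hS'last0 hDnil, by rw [hbr]; exact h2.symm⟩
          · exact Or.inl (Or.inr (Or.inl (by rw [hbr]; exact h1.symm)))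
        · rw [hSlastD hDnil] at hr
          injection hr with hr
          rw [← hr] at hbr
          by_cases hlz : (D.getLast hDnil).2 = z
          · exact Or.inl (Or.inr (Or.inl (by rw [hbr]; exact hlz)))
          · have hlx : (D.getLast hDnil).2 ≠ x := (hxfreeM _ (List.getLast_mem hDnil)).2
            refine Or.inr ⟨(σ (D.getLast hDnil).1, σ (D.getLast hDnil).2),
              hS'lastD hDnil, ?_⟩
            show P[j].2 = σ (D.getLast hDnil).2
            rw [hσfix _ hlx hlz, hbr]
    · -- zone j = i
      have hget' : (P ++ (z,w) :: D').get ⟨j, hj⟩ = (z, w) := by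
        apply get_of_getElem?
        rw [List.getElem?_append_right (by omega), show j - P.length = 0 by omega]
        exact List.getElem?_cons_zero
      rw [hget']
      have hdrop' : (P ++ (z,w) :: D').drop (j+1) = D' := by
        rw [show j + 1 = P.length + 1 by omega, drop_append_len]
        rfl
      rw [hdrop']
      show w ∈ D'.map Prod.fst ∨ _
      by_cases hDnil : D = []
      · exact Or.inr ⟨(z,w), hS'last0 hDnil, rfl⟩
      · by_cases hwx : w = x
        · by_cases hzf : z ∈ D.map Prod.fst
          · obtain ⟨q₀, hq₀, hq₀1⟩ := List.mem_map.mp hzf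
            refine Or.inl (List.mem_map.mpr ⟨(σ q₀.1, σ q₀.2),
              List.mem_map_of_mem hq₀, ?_⟩)
            show σ q₀.1 = w
            rw [hq₀1, hσz, hwx]
          · have hzx : z ≠ x := fun h => hzw (h.trans hwx.symm)
            have hzM₁ : z ∈ M₁.taxa := by
              rw [hM₁taxa]; exact Finset.mem_erase.mpr ⟨hzx, hz⟩
            have hlz := KFlast hDnil z hzM₁ hzf
            refine Or.inr ⟨(σ (D.getLast hDnil).1, σ (D.getLast hDnil).2),
              hS'lastD hDnil, ?_⟩
            show w = σ (D.getLast hDnil).2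
            rw [hlz, hσz, hwx]
        · by_cases hwf : w ∈ D.map Prod.fst
          · obtain ⟨q₀, hq₀, hq₀1⟩ := List.mem_map.mp hwf
            have hq0z : q₀.1 ≠ z := by rw [hq₀1]; exact fun h => hzw h.symm
            have hq0x : q₀.1 ≠ x := (hxfreeM q₀ hq₀).1
            refine Or.inl (List.mem_map.mpr ⟨(σ q₀.1, σ q₀.2),
              List.mem_map_of_mem hq₀, ?_⟩)
            show σ q₀.1 = w
            rw [hσfix _ hq0x hq0z, hq₀1]
          · have hwM₁ : w ∈ M₁.taxa := by
              rw [hM₁taxa]; exact Finset.mem_erase.mpr ⟨hwx, hw⟩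
            have hlw := KFlast hDnil w hwM₁ hwf
            refine Or.inr ⟨(σ (D.getLast hDnil).1, σ (D.getLast hDnil).2),
              hS'lastD hDnil, ?_⟩
            show w = σ (D.getLast hDnil).2
            rw [hlw, hσfix w hwx (fun h => hzw h.symm)]
    · -- zone j > i
      obtain ⟨k, rfl⟩ : ∃ k, j = i + 1 + k := ⟨j - i - 1, by omega⟩
      have hkD : k < D.length := by omega
      have hkD' : k < D'.length := by omega
      have hget' : (P ++ (z,w) :: D').get ⟨i+1+k, hj⟩ = (σ D[k].1, σ D[k].2) := by
        apply get_of_getElem?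
        rw [List.getElem?_append_right (by omega),
          show i + 1 + k - P.length = k + 1 by omega,
          List.getElem?_cons_succ, hD'def, List.getElem?_map,
          List.getElem?_eq_getElem hkD]
        rfl
      have hgetS : S.get ⟨i+1+k, hjS⟩ = D[k] := by
        apply get_of_getElem?
        conv_lhs => rw [hsplit]
        rw [List.getElem?_append_right (by omega),
          show i + 1 + k - P.length = k + 1 by omega,
          List.getElem?_cons_succ]
        exact List.getElem?_eq_getElem hkD
      have hcond := hCPS.2 (i+1+k) hjS
      rw [hgetS] at hcond
      rw [hget']
      have hdropS : S.drop (i+1+k+1) = D.drop (k+1) := by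
        conv_lhs => rw [hsplit]
        rw [show i+1+k+1 = P.length + (k+2) by omega, drop_append_len]
        rfl
      have hdropS' : (P ++ (z,w) :: D').drop (i+1+k+1) = D'.drop (k+1) := by
        rw [show i+1+k+1 = P.length + (k+2) by omega, drop_append_len]
        rfl
      rw [hdropS] at hcond
      rw [hdropS']
      have hDnil : D ≠ [] := by
        intro h
        rw [h] at hkD
        simp at hkD
      rcases hcond with hc | ⟨r, hr, hbr⟩
      · obtain ⟨q₀, hq₀, hq₀1⟩ := List.mem_map.mp hc
        refine Or.inl ?_
        have hq₀D' : (σ q₀.1, σ q₀.2) ∈ D'.drop (k+1) := by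
          rw [hD'def, ← List.map_drop]
          exact List.mem_map_of_mem hq₀
        refine List.mem_map.mpr ⟨_, hq₀D', ?_⟩
        show σ q₀.1 = σ D[k].2
        rw [hq₀1]
      · rw [hSlastD hDnil] at hr
        injection hr with hr
        rw [← hr] at hbr
        refine Or.inr ⟨(σ (D.getLast hDnil).1, σ (D.getLast hDnil).2),
          hS'lastD hDnil, ?_⟩
        show σ D[k].2 = σ (D.getLast hDnil).2
        rw [hbr]
  · -- Reduces
    show (N.reduceSeq (P ++ (z, w) :: D')).IsSingleLeaf
    rw [reduceSeq_append, hMP, reduceSeq_cons]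
    exact RelFull.singleLeaf hRedM
  · -- minimality
    intro j hj
    have hjS : j < S.length := hS'len ▸ hj
    rcases Nat.lt_trichotomy j i with hji | hji | hji
    · have h1 : (P ++ (z,w) :: D').take (j+1) = S.take (j+1) := by
        rw [take_append_le _ _ (by omega : j+1 ≤ P.length), hP, List.take_take,
          min_eq_left (by omega)]
      have h2 : (P ++ (z,w) :: D').take j = S.take j := by
        rw [take_append_le _ _ (by omega : j ≤ P.length), hP, List.take_take,
          min_eq_left (by omega)]
      rw [h1, h2]
      exact hMin j hjS
    · have h1 : (P ++ (z,w) :: D').take (j+1) = P ++ [(z,w)] := by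
        rw [show j + 1 = P.length + 1 by omega, take_append_len]
        rfl
      have h2 : (P ++ (z,w) :: D').take j = P := by
        rw [take_append_le _ _ (by omega : j ≤ P.length),
          List.take_of_length_le (by omega : P.length ≤ j)]
      rw [h1, h2, reduceSeq_append, hMP, reduceSeq_singleton]
      intro heq
      have ht : (M.reducePair (z,w)).taxa = M.taxa := congrArg Network.taxa heq
      rw [← hM₁'def, hM₁'taxa] at ht
      have hznot := Finset.notMem_erase z M.taxa
      rw [ht] at hznot
      exact hznot hz
    · obtain ⟨k, rfl⟩ : ∃ k, j = i + 1 + k := ⟨j - i - 1, by omega⟩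
      have hkD : k < D.length := by omega
      rw [show i+1+k+1 = i+1+(k+1) by omega, hBk (k+1), hBk k]
      intro heq
      apply hMin (i+1+k) hjS
      rw [show i+1+k+1 = i+1+(k+1) by omega, hAk (k+1), hAk k]
      exact ((RelK (k+1)).eq_iff (RelK k)).mpr heq
end

section
/- Let N be a phylogenetic network and c an ordered pair of leaves. Then the reduced network Nc is a subnetwork of N (there is an embedding of Nc into N). -/
open scoped Classical

open Network

namespace Network

variable {X : Type}

lemma pathEdges_cons_cons (a b : ℕ) (l : List ℕ) :
    pathEdges (a :: b :: l) = (a, b) :: pathEdges (b :: l) := rfl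

lemma pathEdges_mid_append (q : List ℕ) (b : ℕ) (r : List ℕ) :
    pathEdges (q ++ b :: r) = pathEdges (q ++ [b]) ++ pathEdges (b :: r) := by
  induction q with
  | nil => simp [pathEdges]
  | cons x q ih =>
    cases q with
    | nil => simp [pathEdges]
    | cons y q' =>
      have h1 : (x :: y :: q') ++ b :: r = x :: y :: (q' ++ b :: r) := rfl
      have h2 : (x :: y :: q') ++ [b] = x :: y :: (q' ++ [b]) := rfl
      rw [h1, h2, pathEdges_cons_cons, pathEdges_cons_cons, List.cons_append]
      congr 1

lemma chain'_mem_pathEdges {R : ℕ → ℕ → Prop} :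
    ∀ {l : List ℕ}, l.Chain' R → ∀ p ∈ pathEdges l, R p.1 p.2
  | [], _, p, hp => by simp [pathEdges] at hp
  | [a], _, p, hp => by simp [pathEdges] at hp
  | a :: b :: l, h, p, hp => by
    rw [pathEdges_cons_cons] at hp
    rcases List.mem_cons.mp hp with h1 | h1
    · subst h1; exact (List.isChain_cons_cons.mp h).1
    · exact chain'_mem_pathEdges (List.isChain_cons_cons.mp h).2 p h1

lemma seg_decomp {l : List ℕ} {a b : ℕ} (h1 : l.head? = some a) (h2 : l.getLast? = some b)
    (h3 : 2 ≤ l.length) : ∃ q, l = q ++ [b] ∧ q.head? = some a ∧ q ≠ [] := by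
  obtain ⟨x, y, t, rfl⟩ : ∃ x y t, l = x :: y :: t := by
    match l, h3 with
    | x :: y :: t, _ => exact ⟨x, y, t, rfl⟩
  have hne : x :: y :: t ≠ [] := by simp
  refine ⟨(x :: y :: t).dropLast, ?_, ?_, ?_⟩
  · have := List.dropLast_append_getLast hne
    rw [List.getLast?_eq_getLast hne] at h2
    rw [Option.some_inj] at h2
    rw [h2] at this
    exact this.symm
  · rw [List.dropLast_cons₂]
    simpa using h1
  · rw [List.dropLast_cons₂]; simp

/-- Glue together paths along a path. -/
def glue (g : ℕ × ℕ → List ℕ) : List ℕ → List ℕ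
  | [] => []
  | [a] => [a]
  | a :: b :: l => (g (a, b)).dropLast ++ glue g (b :: l)

lemma glue_cons₂ (g : ℕ × ℕ → List ℕ) (a b : ℕ) (l : List ℕ) :
    glue g (a :: b :: l) = (g (a, b)).dropLast ++ glue g (b :: l) := rfl

/-- The hypothesis that `g` maps each edge of `l` to a nontrivial path with the
right endpoints. -/
def Segs (g : ℕ × ℕ → List ℕ) (l : List ℕ) : Prop :=
  ∀ p ∈ pathEdges l, (g p).head? = some p.1 ∧ (g p).getLast? = some p.2 ∧ 2 ≤ (g p).length

lemma Segs.tail {g : ℕ × ℕ → List ℕ} {a b : ℕ} {l : List ℕ}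
    (h : Segs g (a :: b :: l)) : Segs g (b :: l) := by
  intro p hp
  exact h p (by rw [pathEdges_cons_cons]; exact List.mem_cons_of_mem _ hp)

lemma Segs.headSeg {g : ℕ × ℕ → List ℕ} {a b : ℕ} {l : List ℕ} (h : Segs g (a :: b :: l)) :
    ∃ q, g (a, b) = q ++ [b] ∧ q.head? = some a ∧ q ≠ [] := by
  have hp := h (a, b) (by rw [pathEdges_cons_cons]; exact List.mem_cons_self)
  exact seg_decomp hp.1 hp.2.1 hp.2.2

lemma glue_head? (g : ℕ × ℕ → List ℕ) :
    ∀ (l : List ℕ), Segs g l → (glue g l).head? = l.head?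
  | [], _ => rfl
  | [a], _ => rfl
  | a :: b :: l, h => by
    obtain ⟨q, hq, hqh, hqne⟩ := h.headSeg
    obtain ⟨c, cs, rfl⟩ := List.exists_cons_of_ne_nil hqne
    rw [glue_cons₂, hq, List.dropLast_concat, List.cons_append]
    simpa using hqh

lemma glue_cons_exists (g : ℕ × ℕ → List ℕ) (b : ℕ) (l : List ℕ) (h : Segs g (b :: l)) :
    ∃ rest, glue g (b :: l) = b :: rest := by
  have hh := glue_head? g (b :: l) h
  cases hgl : glue g (b :: l) with
  | nil => rw [hgl] at hh; simp at hh
  | cons x xs =>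
    rw [hgl] at hh
    simp only [List.head?_cons] at hh
    exact ⟨xs, by rw [Option.some_inj] at hh; rw [hh]⟩

lemma glue_getLast? (g : ℕ × ℕ → List ℕ) :
    ∀ (l : List ℕ), Segs g l → (glue g l).getLast? = l.getLast?
  | [], _ => rfl
  | [a], _ => rfl
  | a :: b :: l, h => by
    obtain ⟨rest, hrest⟩ := glue_cons_exists g b l h.tail
    have ih := glue_getLast? g (b :: l) h.tail
    rw [glue_cons₂, List.getLast?_append_of_ne_nil _ (by rw [hrest]; simp), ih]
    rw [List.getLast?_cons_cons]

lemma glue_pathEdges (g : ℕ × ℕ → List ℕ) :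
    ∀ (l : List ℕ), Segs g l →
      pathEdges (glue g l) = (pathEdges l).flatMap (fun p => pathEdges (g p))
  | [], _ => rfl
  | [a], _ => rfl
  | a :: b :: l, h => by
    obtain ⟨q, hq, hqh, hqne⟩ := h.headSeg
    obtain ⟨rest, hrest⟩ := glue_cons_exists g b l h.tail
    have ih := glue_pathEdges g (b :: l) h.tail
    rw [glue_cons₂, hq, List.dropLast_concat, hrest, pathEdges_mid_append, ← hq, ← hrest,
      ih, pathEdges_cons_cons, List.flatMap_cons]

lemma glue_chain' {R : ℕ → ℕ → Prop} (g : ℕ × ℕ → List ℕ) :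
    ∀ (l : List ℕ), Segs g l → (∀ p ∈ pathEdges l, (g p).Chain' R) →
      (glue g l).Chain' R
  | [], _, _ => List.isChain_nil
  | [a], _, _ => List.isChain_singleton a
  | a :: b :: l, h, hc => by
    obtain ⟨q, hq, hqh, hqne⟩ := h.headSeg
    obtain ⟨rest, hrest⟩ := glue_cons_exists g b l h.tail
    have ih : (glue g (b :: l)).Chain' R :=
      glue_chain' g (b :: l) h.tail
        (fun p hp => hc p (by rw [pathEdges_cons_cons]; exact List.mem_cons_of_mem _ hp))
    rw [hrest] at ih
    have hcab : (g (a, b)).Chain' R :=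
      hc (a, b) (by rw [pathEdges_cons_cons]; exact List.mem_cons_self)
    rw [glue_cons₂, hq, List.dropLast_concat, hrest]
    have heq : q ++ b :: rest = (q ++ [b]) ++ rest := by simp
    rw [heq]; simp only [List.Chain']; rw [List.isChain_append]
    refine ⟨by rw [← hq]; exact hcab, (List.isChain_cons.mp ih).2, ?_⟩
    intro x hx y hy
    rw [List.getLast?_concat] at hx
    rw [Option.mem_def, Option.some_inj] at hx
    subst hx
    exact (List.isChain_cons.mp ih).1 y hy

lemma glue_length (g : ℕ × ℕ → List ℕ) (a b : ℕ) (l : List ℕ) (h : Segs g (a :: b :: l)) :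
    2 ≤ (glue g (a :: b :: l)).length := by
  obtain ⟨q, hq, hqh, hqne⟩ := h.headSeg
  obtain ⟨rest, hrest⟩ := glue_cons_exists g b l h.tail
  rw [glue_cons₂, hq, List.dropLast_concat, hrest, List.length_append, List.length_cons]
  have := List.length_pos_iff.mpr hqne
  omega

/-- An edge-to-path map witnessing a subnetwork relation with the identity
vertex map, together with the extra condition that every path has length at
least two. -/
def GoodMap (N' N : Network X) (g : ℕ × ℕ → List ℕ) : Prop :=
  (∀ v ∈ N'.V, v ∈ N.V) ∧
  (∀ x ∈ N'.taxa, x ∈ N.taxa ∧ N'.label x = N.label x) ∧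
  (∀ e ∈ N'.E, N.IsDipath (g e) ∧ (g e).head? = some e.1 ∧ (g e).getLast? = some e.2 ∧
    2 ≤ (g e).length) ∧
  (∀ e ∈ N'.E, ∀ e' ∈ N'.E, e ≠ e' → ∀ p ∈ pathEdges (g e), p ∉ pathEdges (g e'))

lemma GoodMap.isSubnetwork {N' N : Network X} {g : ℕ × ℕ → List ℕ}
    (h : GoodMap N' N g) : IsSubnetwork N' N := by
  refine ⟨id, g, h.1, fun a _ b _ hab => hab, fun x hx => (h.2.1 x hx).2, ?_, h.2.2.2⟩
  intro e he
  exact ⟨(h.2.2.1 e he).1, (h.2.2.1 e he).2.1, (h.2.2.1 e he).2.2.1⟩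

lemma GoodMap.trans {N'' N' N : Network X} {g₁ g₂ : ℕ × ℕ → List ℕ}
    (h₁ : GoodMap N'' N' g₁) (h₂ : GoodMap N' N g₂) :
    GoodMap N'' N (fun e => glue g₂ (g₁ e)) := by
  have hEdge : ∀ e ∈ N''.E, ∀ p ∈ pathEdges (g₁ e), p ∈ N'.E := by
    intro e he p hp
    have := chain'_mem_pathEdges (h₁.2.2.1 e he).1 p hp
    exact this
  have hSegs : ∀ e ∈ N''.E, Segs g₂ (g₁ e) := by
    intro e he p hp
    have hpE := hEdge e he p hp
    exact ⟨(h₂.2.2.1 p hpE).2.1, (h₂.2.2.1 p hpE).2.2.1, (h₂.2.2.1 p hpE).2.2.2⟩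
  refine ⟨fun v hv => h₂.1 v (h₁.1 v hv),
    fun x hx => ⟨(h₂.2.1 x (h₁.2.1 x hx).1).1,
      by rw [(h₁.2.1 x hx).2, (h₂.2.1 x (h₁.2.1 x hx).1).2]⟩, ?_, ?_⟩
  · intro e he
    have hseg := hSegs e he
    have hlen := (h₁.2.2.1 e he).2.2.2
    obtain ⟨a, b, l, hab⟩ : ∃ a b l, g₁ e = a :: b :: l := by
      match hl : g₁ e, hlen with
      | a :: b :: l, _ => exact ⟨a, b, l, rfl⟩
      | [], h => simp at h
      | [a], h => simp at h
    refine ⟨?_, ?_, ?_, ?_⟩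
    · exact glue_chain' g₂ (g₁ e) hseg
        (fun p hp => (h₂.2.2.1 p (hEdge e he p hp)).1)
    · rw [glue_head? g₂ (g₁ e) hseg]; exact (h₁.2.2.1 e he).2.1
    · rw [glue_getLast? g₂ (g₁ e) hseg]; exact (h₁.2.2.1 e he).2.2.1
    · show 2 ≤ (glue g₂ (g₁ e)).length
      rw [hab]
      exact glue_length g₂ a b l (hab ▸ hseg)
  · intro e he e' he' hne p hp hp'
    rw [glue_pathEdges g₂ (g₁ e) (hSegs e he)] at hp
    rw [glue_pathEdges g₂ (g₁ e') (hSegs e' he')] at hp'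
    obtain ⟨q, hq, hpq⟩ := List.mem_flatMap.mp hp
    obtain ⟨q', hq', hpq'⟩ := List.mem_flatMap.mp hp'
    have hqq' : q ≠ q' := by
      intro hEq
      exact (h₁.2.2.2 e he e' he' hne q hq) (hEq ▸ hq')
    exact (h₂.2.2.2 q (hEdge e he q hq) q' (hEdge e' he' q' hq') hqq' p hpq) hpq'

lemma goodMap_of_subset {N' N : Network X}
    (hV : ∀ v ∈ N'.V, v ∈ N.V) (hE : ∀ e ∈ N'.E, e ∈ N.E)
    (ht : ∀ x ∈ N'.taxa, x ∈ N.taxa ∧ N'.label x = N.label x) :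
    GoodMap N' N (fun e => [e.1, e.2]) := by
  refine ⟨hV, ht, ?_, ?_⟩
  · intro e he
    refine ⟨?_, rfl, rfl, by simp⟩
    simp only [IsDipath, List.Chain', List.isChain_cons_cons, List.isChain_singleton, and_true]
    exact hE e he
  · intro e he e' he' hne p hp hp'
    have h1 : p = e := by
      simp only [pathEdges, List.zip, List.tail, List.zipWith, List.mem_singleton] at hp
      rw [hp]
    have h2 : p = e' := by
      simp only [pathEdges, List.zip, List.tail, List.zipWith, List.mem_singleton] at hp'
      rw [hp']
    exact hne (h1 ▸ h2)

lemma suppress_goodMap (M : Network X) (p : ℕ) :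
    ∃ g, GoodMap (M.suppress p) M g := by
  by_cases h : M.indeg p = 1 ∧ M.outdeg p = 1
  · obtain ⟨a, ha⟩ := Finset.card_eq_one.mp h.1
    obtain ⟨b, hb⟩ := Finset.card_eq_one.mp h.2
    have haE : a ∈ M.E ∧ a.2 = p := by
      have : a ∈ M.E.filter (fun e => e.2 = p) := ha ▸ Finset.mem_singleton_self a
      simpa using this
    have hbE : b ∈ M.E ∧ b.1 = p := by
      have : b ∈ M.E.filter (fun e => e.1 = p) := hb ▸ Finset.mem_singleton_self b
      simpa using this
    have hpar : M.parents p = {a.1} := by rw [parents, ha, Finset.image_singleton]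
    have hchn : M.children p = {b.2} := by rw [children, hb, Finset.image_singleton]
    have hVE : (M.suppress p).V = M.V.erase p ∧
        (M.suppress p).E = (M.E.filter (fun e => e.1 ≠ p ∧ e.2 ≠ p)) ∪ {(a.1, b.2)} := by
      rw [suppress, if_pos h, hpar, hchn]
      exact ⟨rfl, by rw [Finset.singleton_product_singleton]⟩
    have htaxa : (M.suppress p).taxa = M.taxa ∧ (M.suppress p).label = M.label := by
      rw [suppress, if_pos h]; exact ⟨rfl, rfl⟩
    refine ⟨fun e => if e.1 ≠ p ∧ e.2 ≠ p ∧ e ∈ M.E then [e.1, e.2] else [e.1, p, e.2], ?_⟩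
    have hcase : ∀ e ∈ (M.suppress p).E,
        (e.1 ≠ p ∧ e.2 ≠ p ∧ e ∈ M.E) ∨ (¬(e.1 ≠ p ∧ e.2 ≠ p ∧ e ∈ M.E) ∧ e = (a.1, b.2)) := by
      intro e he
      rw [hVE.2, Finset.mem_union] at he
      by_cases hc : e.1 ≠ p ∧ e.2 ≠ p ∧ e ∈ M.E
      · exact Or.inl hc
      · refine Or.inr ⟨hc, ?_⟩
        rcases he with he | he
        · exfalso
          rw [Finset.mem_filter] at he
          exact hc ⟨he.2.1, he.2.2, he.1⟩
        · exact Finset.mem_singleton.mp he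
    refine ⟨?_, ?_, ?_, ?_⟩
    · intro v hv
      rw [hVE.1] at hv
      exact Finset.mem_of_mem_erase hv
    · intro x hx
      rw [htaxa.1] at hx
      exact ⟨hx, by rw [htaxa.2]⟩
    · intro e he
      have hGe : (fun e : ℕ × ℕ =>
          if e.1 ≠ p ∧ e.2 ≠ p ∧ e ∈ M.E then [e.1, e.2] else [e.1, p, e.2]) e =
          if e.1 ≠ p ∧ e.2 ≠ p ∧ e ∈ M.E then [e.1, e.2] else [e.1, p, e.2] := rfl
      rw [hGe]
      rcases hcase e he with hc | ⟨hc, rfl⟩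
      · rw [if_pos hc]
        refine ⟨?_, rfl, rfl, by simp⟩
        simp only [IsDipath, List.Chain', List.isChain_cons_cons, List.isChain_singleton, and_true]
        exact hc.2.2
      · rw [if_neg hc]
        refine ⟨?_, rfl, rfl, by simp⟩
        simp only [IsDipath, List.Chain', List.isChain_cons_cons, List.isChain_singleton, and_true]
        constructor
        · have : ((a.1, b.2).1, p) = a := by
            rw [← haE.2]
          rw [this]; exact haE.1
        · have : (p, (a.1, b.2).2) = b := by
            rw [← hbE.2]
          rw [this]; exact hbE.1
    · intro e he e' he' hne q hq hq'
      have hpe2 : ∀ x y : ℕ, pathEdges [x, y] = [(x, y)] := fun x y => rfl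
      have hpe3 : ∀ x y z : ℕ, pathEdges [x, y, z] = [(x, y), (y, z)] := fun x y z => rfl
      have hGe : ∀ f : ℕ × ℕ, (fun e : ℕ × ℕ =>
          if e.1 ≠ p ∧ e.2 ≠ p ∧ e ∈ M.E then [e.1, e.2] else [e.1, p, e.2]) f =
          if f.1 ≠ p ∧ f.2 ≠ p ∧ f ∈ M.E then [f.1, f.2] else [f.1, p, f.2] :=
        fun f => rfl
      rw [hGe] at hq hq'
      rcases hcase e he with hc | ⟨hc, rfl⟩ <;> rcases hcase e' he' with hc' | hc'
      · rw [if_pos hc, hpe2, List.mem_singleton] at hq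
        rw [if_pos hc', hpe2, List.mem_singleton] at hq'
        subst hq
        exact hne (Prod.ext (congrArg Prod.fst hq') (congrArg Prod.snd hq'))
      · obtain ⟨hc', he'eq⟩ := hc'
        rw [if_pos hc, hpe2, List.mem_singleton] at hq
        rw [if_neg hc', hpe3] at hq'
        subst hq
        rcases List.mem_cons.mp hq' with h1 | h1
        · exact hc.2.1 (congrArg Prod.snd h1)
        · rw [List.mem_singleton] at h1
          exact hc.1 (congrArg Prod.fst h1)
      · rw [if_neg hc, hpe3] at hq
        rw [if_pos hc', hpe2, List.mem_singleton] at hq'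
        subst hq'
        rcases List.mem_cons.mp hq with h1 | h1
        · exact hc'.2.1 (congrArg Prod.snd h1.symm).symm
        · rw [List.mem_singleton] at h1
          exact hc'.1 (congrArg Prod.fst h1.symm).symm
      · obtain ⟨hc', he'eq⟩ := hc'
        exact hne (he'eq.symm ▸ rfl)
  · refine ⟨fun e => [e.1, e.2], ?_⟩
    have hs : M.suppress p = M := by rw [suppress, if_neg h]
    rw [hs]
    exact goodMap_of_subset (fun v hv => hv) (fun e he => he) (fun x hx => ⟨hx, rfl⟩)

end Network

/-- reducing any ordered pair of leaves gives a subnetwork. -/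
theorem reduced_network_is_subnetwork (X : Type) (N : Network X)
    (hN : N.IsPhylo) (c : X × X) (h1 : c.1 ∈ N.taxa) (h2 : c.2 ∈ N.taxa) :
    IsSubnetwork (N.reducePair c) N := by
  by_cases hc : N.IsCherry c.1 c.2
  · have hM : GoodMap
        ({ V := N.V.erase (N.label c.1),
           E := N.E.filter (fun e => e.1 ≠ N.label c.1 ∧ e.2 ≠ N.label c.1),
           root := N.root, taxa := N.taxa.erase c.1, label := N.label } : Network X) N
        (fun e => [e.1, e.2]) :=
      goodMap_of_subset (fun v hv => Finset.mem_of_mem_erase hv)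
        (fun e he => (Finset.mem_filter.mp he).1)
        (fun x hx => ⟨Finset.mem_of_mem_erase hx, rfl⟩)
    obtain ⟨g, hg⟩ := suppress_goodMap
      ({ V := N.V.erase (N.label c.1),
         E := N.E.filter (fun e => e.1 ≠ N.label c.1 ∧ e.2 ≠ N.label c.1),
         root := N.root, taxa := N.taxa.erase c.1, label := N.label } : Network X)
      (N.theParent (N.label c.1))
    have hfin := (hg.trans hM).isSubnetwork
    unfold reducePair
    rw [if_pos hc]
    exact hfin
  · by_cases hr : N.IsRetCherry c.1 c.2
    · have h1 : GoodMap
          (N.delEdge (N.theParent (N.label c.2), N.theParent (N.label c.1))) N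
          (fun e => [e.1, e.2]) :=
        goodMap_of_subset (fun v hv => hv) (fun e he => Finset.mem_of_mem_erase he)
          (fun x hx => ⟨hx, rfl⟩)
      obtain ⟨g2, hg2⟩ := suppress_goodMap
        (N.delEdge (N.theParent (N.label c.2), N.theParent (N.label c.1)))
        (N.theParent (N.label c.2))
      obtain ⟨g3, hg3⟩ := suppress_goodMap
        ((N.delEdge (N.theParent (N.label c.2), N.theParent (N.label c.1))).suppress
          (N.theParent (N.label c.2)))
        (N.theParent (N.label c.1))
      have hfin := ((hg3.trans hg2).trans h1).isSubnetwork
      unfold reducePair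
      rw [if_neg hc, if_pos hr]
      exact hfin
    · unfold reducePair
      rw [if_neg hc, if_neg hr]
      exact (goodMap_of_subset (fun v hv => hv) (fun e he => he)
        (fun x hx => ⟨hx, rfl⟩)).isSubnetwork
end
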